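/- arXiv:2004.12371 — 11 statements merged into one kernel-verified Lean document; each statement's English description precedes it below -/
import Mathlib

section
/- Let A and B be types and R ⊆ A × B. Then R is a finite union of rectangles (i.e., there exist k ∈ ℕ and families S : Fin k → Set A, T : Fin k → Set B with R = ⋃_{i<k} S_i ×ˢ T_i) if and only if the set of fibers { {y : B | (x,y) ∈ R} | x ∈ A } is finite. -/
/-- A relation `R ⊆ A × B` is a finite union of rectangles iff the set of its
fibers `{ {y | (x,y) ∈ R} | x ∈ A }` is finite. -/
theorem stmt_0 {A B : Type*} (R : Set (A × B)) :
    (∃ (k : ℕ) (S : Fin k → Set A) (T : Fin k → Set B),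
        R = ⋃ i, S i ×ˢ T i) ↔
      (Set.range fun x : A => {y : B | (x, y) ∈ R}).Finite := by
  constructor
  · rintro ⟨k, S, T, rfl⟩
    have hsub : (Set.range fun x : A => {y : B | (x, y) ∈ ⋃ i, S i ×ˢ T i}) ⊆
        (fun σ : Set (Fin k) => ⋃ i ∈ σ, T i) '' Set.univ := by
      rintro _ ⟨x, rfl⟩
      refine ⟨{i | x ∈ S i}, Set.mem_univ _, ?_⟩
      ext y
      simp only [Set.mem_iUnion, Set.mem_setOf_eq, Set.mem_prod]
      tauto
    exact (Set.finite_univ.image _).subset hsub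
  · intro h
    haveI : Finite ↥(Set.range fun x : A => {y : B | (x, y) ∈ R}) := h
    obtain ⟨k, ⟨e⟩⟩ := Finite.exists_equiv_fin ↥(Set.range fun x : A => {y : B | (x, y) ∈ R})
    refine ⟨k, fun i => {x | {y : B | (x, y) ∈ R} = (e.symm i : Set B)},
      fun i => (e.symm i : Set B), ?_⟩
    ext ⟨x, y⟩
    simp only [Set.mem_iUnion, Set.mem_prod, Set.mem_setOf_eq]
    constructor
    · intro hxy
      refine ⟨e ⟨{y : B | (x, y) ∈ R}, ⟨x, rfl⟩⟩, ?_, ?_⟩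
      · rw [Equiv.symm_apply_apply]
      · rw [Equiv.symm_apply_apply]; exact hxy
    · rintro ⟨i, hx, hy⟩
      have : y ∈ {y : B | (x, y) ∈ R} := hx ▸ hy
      exact this
end

section
/- Let A and B be types, k ∈ ℕ, S : Fin k → Set A and T : Fin k → Set B, and suppose R = ⋃_{i<k} S_i ×ˢ T_i ⊆ A × B. Then the set of fibers { {y : B | (x,y) ∈ R} | x ∈ A } has at most 2^k elements. -/
/-- If `R = ⋃_{i < k} S i ×ˢ T i` then `R` has at most `2 ^ k` distinct fibers. -/
theorem stmt_1 {A B : Type*} (k : ℕ) (S : Fin k → Set A) (T : Fin k → Set B)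
    (R : Set (A × B)) (hR : R = ⋃ i, S i ×ˢ T i) :
    (Set.range fun x : A => {y : B | (x, y) ∈ R}).encard ≤ 2 ^ k := by
  subst hR
  have hsub : (Set.range fun x : A => {y : B | (x, y) ∈ ⋃ i, S i ×ˢ T i}) ⊆
      Set.range (fun I : Set (Fin k) => ⋃ i ∈ I, T i) := by
    rintro _ ⟨x, rfl⟩
    refine ⟨{i | x ∈ S i}, ?_⟩
    ext y
    simp [Set.mem_iUnion, and_comm]
  refine le_trans (Set.encard_mono hsub) ?_
  rw [← Set.image_univ]
  refine le_trans (Set.encard_image_le _ _) ?_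
  rw [Set.encard_univ, ENat.card_eq_coe_natCard]
  norm_num
end

section
/- Let A and B be types, R ⊆ A × B, let ~ be the relation on A defined by x ~ x' iff ∀ y y', ((x,y) ∈ R ∧ (x',y') ∈ R) → ((x',y) ∈ R ∧ (x,y') ∈ R), and let D = {x : A | ∃ y, (x,y) ∈ R}. Then R is a finite union of rectangles if and only if the set of ~-equivalence classes of elements of D, i.e. the set { {x' ∈ D | x ~ x'} | x ∈ D }, is finite. -/
open Set

/-- `R` is a finite union of rectangles iff the set of `~`-equivalence classes of
elements of the domain `D` is finite. -/
theorem stmt_3 {A B : Type*} (R : Set (A × B))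
    (sim : A → A → Prop)
    (hsim : ∀ x x', sim x x' ↔
      ∀ y y', (x, y) ∈ R ∧ (x', y') ∈ R → (x', y) ∈ R ∧ (x, y') ∈ R)
    (D : Set A) (hD : D = {x : A | ∃ y, (x, y) ∈ R}) :
    (∃ (k : ℕ) (S : Fin k → Set A) (T : Fin k → Set B),
        R = ⋃ i, S i ×ˢ T i) ↔
      {C : Set A | ∃ x ∈ D, C = {x' ∈ D | sim x x'}}.Finite := by
  classical
  set row : A → Set B := fun x => {y | (x, y) ∈ R} with hrow
  have key : ∀ x ∈ D, ∀ x' ∈ D, (sim x x' ↔ row x = row x') := by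
    intro x hx x' hx'
    rw [hD] at hx hx'
    obtain ⟨y0, hy0⟩ := hx
    obtain ⟨y1, hy1⟩ := hx'
    rw [hsim]
    constructor
    · intro h
      ext y
      constructor
      · intro hy
        exact (h y y1 ⟨hy, hy1⟩).1
      · intro hy
        exact (h y0 y ⟨hy0, hy⟩).2
    · rintro h y y' ⟨h1, h2⟩
      constructor
      · have : y ∈ row x := h1
        rw [h] at this; exact this
      · have : y' ∈ row x' := h2
        rw [← h] at this; exact this
  constructor
  · rintro ⟨k, S, T, hR⟩
    have hrows : (row '' D).Finite := by
      have hsub : row '' D ⊆ (fun s : Set (Fin k) => ⋃ i ∈ s, T i) '' Set.univ := by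
        rintro _ ⟨x, hx, rfl⟩
        refine ⟨{i | x ∈ S i}, mem_univ _, ?_⟩
        ext y
        simp only [mem_iUnion, mem_setOf_eq, hrow]
        constructor
        · rintro ⟨i, hxi, hyi⟩
          show (x, y) ∈ R
          rw [hR]
          exact mem_iUnion.2 ⟨i, ⟨hxi, hyi⟩⟩
        · intro hxy
          have : (x, y) ∈ R := hxy
          rw [hR] at this
          obtain ⟨i, hxi, hyi⟩ := mem_iUnion.1 this
          exact ⟨i, hxi, hyi⟩
      exact (Set.finite_univ.image _).subset hsub
    have hsub : {C : Set A | ∃ x ∈ D, C = {x' ∈ D | sim x x'}} ⊆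
        (fun r => {x' ∈ D | row x' = r}) '' (row '' D) := by
      rintro C ⟨x, hx, rfl⟩
      refine ⟨row x, ⟨x, hx, rfl⟩, ?_⟩
      ext x'
      simp only [mem_setOf_eq]
      constructor
      · rintro ⟨hx', he⟩
        exact ⟨hx', (key x hx x' hx').2 he.symm⟩
      · rintro ⟨hx', hs⟩
        exact ⟨hx', ((key x hx x' hx').1 hs).symm⟩
    exact (hrows.image _).subset hsub
  · intro hfin
    have hsimrefl : ∀ x, sim x x := by
      intro x
      rw [hsim]
      rintro y y' ⟨h1, h2⟩
      exact ⟨h1, h2⟩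
    have hrows : (row '' D).Finite := by
      have hsub : row '' D ⊆ (fun C : Set A => {y | ∃ x ∈ C, (x, y) ∈ R}) ''
          {C : Set A | ∃ x ∈ D, C = {x' ∈ D | sim x x'}} := by
        rintro _ ⟨x, hx, rfl⟩
        refine ⟨{x' ∈ D | sim x x'}, ⟨x, hx, rfl⟩, ?_⟩
        ext y
        simp only [mem_setOf_eq]
        constructor
        · rintro ⟨x', ⟨hx', hs⟩, hxy⟩
          have hr : row x = row x' := (key x hx x' hx').1 hs
          show (x, y) ∈ R
          have : y ∈ row x' := hxy
          rw [← hr] at this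
          exact this
        · intro hy
          exact ⟨x, ⟨hx, hsimrefl x⟩, hy⟩
      exact (hfin.image _).subset hsub
    obtain ⟨n, f, hf⟩ := hrows.fin_embedding
    refine ⟨n, fun i => {x ∈ D | row x = f i}, fun i => f i, ?_⟩
    ext ⟨x, y⟩
    constructor
    · intro hxy
      have hxD : x ∈ D := by rw [hD]; exact ⟨y, hxy⟩
      have : row x ∈ Set.range f := by rw [hf]; exact ⟨x, hxD, rfl⟩
      obtain ⟨i, hi⟩ := this
      refine mem_iUnion.2 ⟨i, ⟨⟨hxD, hi.symm⟩, ?_⟩⟩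
      show y ∈ (f i : Set B)
      rw [hi]
      exact hxy
    · intro hxy
      obtain ⟨i, ⟨⟨hxD, hrx⟩, hy⟩⟩ := mem_iUnion.1 hxy
      show y ∈ row x
      rw [hrx]
      exact hy
end

section
/- Let N, k ∈ ℕ and suppose { (x,y) ∈ ℕ × ℕ | x + y ≤ N } = ⋃_{i<k} S_i ×ˢ T_i for some S : Fin k → Set ℕ and T : Fin k → Set ℕ. Then k ≥ N + 1. In particular, any representation of {(x,y) | x + y ≤ 2^n} as a finite union of rectangles (a monadic decomposition in disjunctive normal form) requires at least 2^n + 1 disjuncts. -/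
lemma aux_main (N k : ℕ) (S T : Fin k → Set ℕ)
    (h : {p : ℕ × ℕ | p.1 + p.2 ≤ N} = ⋃ i, S i ×ˢ T i) : k ≥ N + 1 := by
  have hmem : ∀ j : Fin (N + 1), ∃ i : Fin k, (j : ℕ) ∈ S i ∧ (N - (j : ℕ)) ∈ T i := by
    intro j
    have hj : ((j : ℕ), N - (j : ℕ)) ∈ {p : ℕ × ℕ | p.1 + p.2 ≤ N} := by
      simp only [Set.mem_setOf_eq]
      omega
    rw [h] at hj
    simpa using hj
  choose f hf1 hf2 using hmem
  have hinj : Function.Injective f := by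
    intro a b hab
    by_contra hne
    wlog hlt : (a : ℕ) < (b : ℕ) generalizing a b
    · exact this hab.symm (Ne.symm hne) (by omega)
    · have hb : (b : ℕ) ∈ S (f a) := hab ▸ hf1 b
      have ha : (N - (a : ℕ)) ∈ T (f a) := hf2 a
      have : ((b : ℕ), N - (a : ℕ)) ∈ ⋃ i, S i ×ˢ T i :=
        Set.mem_iUnion.2 ⟨f a, hb, ha⟩
      rw [← h] at this
      simp only [Set.mem_setOf_eq] at this
      have := a.isLt
      omega
  have := Fintype.card_le_of_injective f hinj
  simpa using this

/-- Any representation of `{(x,y) | x + y ≤ N}` as a union of `k` rectangles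
requires `k ≥ N + 1`; in particular `{(x,y) | x + y ≤ 2^n}` needs at least
`2^n + 1` disjuncts. -/
theorem stmt_6 :
    (∀ (N k : ℕ) (S T : Fin k → Set ℕ),
        {p : ℕ × ℕ | p.1 + p.2 ≤ N} = ⋃ i, S i ×ˢ T i → k ≥ N + 1) ∧
    (∀ (n k : ℕ) (S T : Fin k → Set ℕ),
        {p : ℕ × ℕ | p.1 + p.2 ≤ 2 ^ n} = ⋃ i, S i ×ˢ T i → k ≥ 2 ^ n + 1) := by
  exact ⟨aux_main, fun n => aux_main (2 ^ n)⟩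
end

section
/- Let N, k ∈ ℕ and suppose { (x,y) ∈ ℕ × ℕ | x + y ≤ N } = ⋂_{j<k} ((S_j ×ˢ Set.univ) ∪ (Set.univ ×ˢ T_j)) for some S : Fin k → Set ℕ and T : Fin k → Set ℕ. Then k ≥ N + 2. In particular, any monadic decomposition of {(x,y) | x + y ≤ 2^n} in conjunctive normal form requires at least 2^n + 2 clauses. -/
lemma aux_lower (N k : ℕ) (S T : Fin k → Set ℕ)
    (h : {p : ℕ × ℕ | p.1 + p.2 ≤ N} =
      ⋂ j, ((S j ×ˢ (Set.univ : Set ℕ)) ∪ ((Set.univ : Set ℕ) ×ˢ T j))) :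
    k ≥ N + 2 := by
  have key : ∀ x : Fin (N + 2), ∃ j : Fin k,
      (x : ℕ) ∉ S j ∧ (N + 1 - (x : ℕ)) ∉ T j := by
    intro x
    have hx : (x : ℕ) ≤ N + 1 := Nat.lt_succ_iff.mp x.2
    have hnot : ((x : ℕ), N + 1 - (x : ℕ)) ∉ {p : ℕ × ℕ | p.1 + p.2 ≤ N} := by
      simp only [Set.mem_setOf_eq]
      omega
    rw [h, Set.mem_iInter] at hnot
    push_neg at hnot
    obtain ⟨j, hj⟩ := hnot
    refine ⟨j, ?_, ?_⟩ <;> intro hm <;> apply hj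
    · exact Or.inl ⟨hm, trivial⟩
    · exact Or.inr ⟨trivial, hm⟩
  choose f hf1 hf2 using key
  have step : ∀ a b : Fin (N + 2), f a = f b → (a : ℕ) < (b : ℕ) → False := by
    intro a b hab hlt
    have hb : (b : ℕ) ≤ N + 1 := Nat.lt_succ_iff.mp b.2
    have hmem : ((a : ℕ), N + 1 - (b : ℕ)) ∈ {p : ℕ × ℕ | p.1 + p.2 ≤ N} := by
      simp only [Set.mem_setOf_eq]; omega
    rw [h, Set.mem_iInter] at hmem
    rcases hmem (f a) with h1 | h2
    · exact hf1 a h1.1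
    · rw [hab] at h2; exact hf2 b h2.2
  have hinj : Function.Injective f := by
    intro a b hab
    rcases lt_trichotomy (a : ℕ) (b : ℕ) with hlt | heq | hgt
    · exact absurd (step a b hab hlt) not_false
    · exact Fin.ext heq
    · exact absurd (step b a hab.symm hgt) not_false
  calc N + 2 = Fintype.card (Fin (N + 2)) := by simp
    _ ≤ Fintype.card (Fin k) := Fintype.card_le_of_injective f hinj
    _ = k := by simp

/-- Any representation of `{(x,y) | x + y ≤ N}` as an intersection of `k` clauses
`(S j ×ˢ univ) ∪ (univ ×ˢ T j)` requires `k ≥ N + 2`; in particular a CNF monadic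
decomposition of `{(x,y) | x + y ≤ 2^n}` needs at least `2^n + 2` clauses. -/
theorem stmt_7 :
    (∀ (N k : ℕ) (S T : Fin k → Set ℕ),
        {p : ℕ × ℕ | p.1 + p.2 ≤ N} =
          ⋂ j, ((S j ×ˢ (Set.univ : Set ℕ)) ∪ ((Set.univ : Set ℕ) ×ˢ T j)) →
        k ≥ N + 2) ∧
    (∀ (n k : ℕ) (S T : Fin k → Set ℕ),
        {p : ℕ × ℕ | p.1 + p.2 ≤ 2 ^ n} =
          ⋂ j, ((S j ×ˢ (Set.univ : Set ℕ)) ∪ ((Set.univ : Set ℕ) ×ˢ T j)) →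
        k ≥ 2 ^ n + 2) := by
  exact ⟨aux_lower, fun n => aux_lower (2 ^ n)⟩
end

section
/- Let n ∈ ℕ, let A : Fin n → Type, and let R ⊆ (∀ i, A i). Then R is a finite union of boxes (i.e., there exist k ∈ ℕ and S : Fin k → ∀ i, Set (A i) with R = ⋃_{j<k} { x | ∀ i, x i ∈ S j i }) if and only if for every coordinate i, the function mapping a : A i to the set { x : (∀ j, A j) | Function.update x i a ∈ R } has finite range. -/
/-- A relation `R` on a finite product `∀ i, A i` is a finite union of boxes iff
for every coordinate `i` the map `a ↦ { x | Function.update x i a ∈ R }` has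
finite range. -/
theorem stmt_8 (n : ℕ) (A : Fin n → Type*) (R : Set (∀ i, A i)) :
    (∃ (k : ℕ) (S : Fin k → ∀ i, Set (A i)),
        R = ⋃ j, {x : ∀ i, A i | ∀ i, x i ∈ S j i}) ↔
      ∀ i : Fin n,
        (Set.range fun a : A i =>
          {x : ∀ j, A j | Function.update x i a ∈ R}).Finite := by
  classical
  set f : ∀ i : Fin n, A i → Set (∀ j, A j) :=
    fun i a => {x | Function.update x i a ∈ R} with hf
  constructor
  · rintro ⟨k, S, rfl⟩ i
    apply Set.Finite.subset (Set.finite_range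
      (fun T : Set (Fin k) => ⋃ j ∈ T,
        {x : ∀ i', A i' | ∀ i', x i' ∈ Function.update (S j) i Set.univ i'}))
    rintro _ ⟨a, rfl⟩
    refine ⟨{j | a ∈ S j i}, ?_⟩
    ext x
    simp only [Set.mem_iUnion, Set.mem_setOf_eq, f]
    constructor
    · rintro ⟨j, ha, hx⟩
      refine ⟨j, fun i' => ?_⟩
      by_cases h : i' = i
      · subst h
        rwa [Function.update_self]
      · rw [Function.update_of_ne h]
        have := hx i'
        rwa [Function.update_of_ne h] at this
    · rintro ⟨j, hj⟩
      have ha : a ∈ S j i := by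
        have := hj i
        rwa [Function.update_self] at this
      refine ⟨j, ha, fun i' => ?_⟩
      by_cases h : i' = i
      · subst h
        rw [Function.update_self]
        exact Set.mem_univ _
      · have := hj i'
        rw [Function.update_of_ne h] at this
        rwa [Function.update_of_ne h]
  · intro hfin
    have key : ∀ x y : ∀ i, A i, (∀ i, f i (x i) = f i (y i)) → (x ∈ R ↔ y ∈ R) := by
      intro x y h
      have main : ∀ m : ℕ, m ≤ n →
          ((fun i : Fin n => if (i : ℕ) < m then y i else x i) ∈ R ↔ x ∈ R) := by
        intro m
        induction m with
        | zero => intro _; simp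
        | succ m ih =>
          intro hm
          have hm' : m < n := hm
          set im : Fin n := ⟨m, hm'⟩ with him
          have hz : (fun i : Fin n => if (i : ℕ) < m + 1 then y i else x i) =
              Function.update (fun i : Fin n => if (i : ℕ) < m then y i else x i) im (y im) := by
            funext i
            by_cases hi : i = im
            · subst hi
              rw [Function.update_self]
              simp [him]
            · rw [Function.update_of_ne hi]
              have : (i : ℕ) ≠ m := fun hc => hi (Fin.ext hc)
              by_cases hlt : (i : ℕ) < m
              · simp [hlt, Nat.lt_succ_of_lt hlt]
              · have : ¬ (i : ℕ) < m + 1 := by omega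
                simp [hlt, this]
            
          rw [hz]
          have h1 : Function.update (fun i : Fin n => if (i : ℕ) < m then y i else x i) im (y im) ∈ R
              ↔ (fun i : Fin n => if (i : ℕ) < m then y i else x i) ∈ f im (y im) := Iff.rfl
          rw [h1, ← h im]
          have h2 : (fun i : Fin n => if (i : ℕ) < m then y i else x i) ∈ f im (x im)
              ↔ Function.update (fun i : Fin n => if (i : ℕ) < m then y i else x i) im (x im) ∈ R :=
            Iff.rfl
          rw [h2]
          have hx : Function.update (fun i : Fin n => if (i : ℕ) < m then y i else x i) im (x im)
              = (fun i : Fin n => if (i : ℕ) < m then y i else x i) := by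
            have : (fun i : Fin n => if (i : ℕ) < m then y i else x i) im = x im := by
              simp [him]
            conv_lhs => rw [← this]
            exact Function.update_eq_self _ _
          rw [hx]
          exact ih (Nat.le_of_succ_le hm)
      have hy : (fun i : Fin n => if (i : ℕ) < n then y i else x i) = y := by
        funext i; simp [i.isLt]
      have := main n le_rfl
      rw [hy] at this
      exact this.symm
    set g : (∀ i, A i) → (∀ i : Fin n, Set (∀ j, A j)) := fun x i => f i (x i) with hg
    have hC : (g '' R).Finite := by
      apply Set.Finite.subset (Set.Finite.pi (fun i => hfin i))
      rintro _ ⟨x, -, rfl⟩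
      exact fun i _ => ⟨x i, rfl⟩
    set F := hC.toFinset with hF
    refine ⟨F.card, fun j i => {a | f i a = (F.equivFin.symm j : ∀ i : Fin n, Set (∀ j, A j)) i}, ?_⟩
    ext x
    simp only [Set.mem_iUnion, Set.mem_setOf_eq]
    constructor
    · intro hx
      have hm : g x ∈ F := hC.mem_toFinset.2 ⟨x, hx, rfl⟩
      refine ⟨F.equivFin ⟨g x, hm⟩, fun i => ?_⟩
      rw [Equiv.symm_apply_apply]
    · rintro ⟨j, hj⟩
      have hmem : (F.equivFin.symm j : ∀ i : Fin n, Set (∀ j, A j)) ∈ g '' R :=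
        hC.mem_toFinset.1 (F.equivFin.symm j).2
      obtain ⟨y, hy, hgy⟩ := hmem
      refine (key x y fun i => ?_).2 hy
      rw [hj i, ← hgy]
end

section
/- Let Y be a type, R ⊆ ℕ × Y, B ∈ ℕ, and let K be a finite set of positive natural numbers. Suppose that for all x₁, x₂ ≥ B such that x₁ ≡ x₂ (mod k) for every k ∈ K, and for all y ∈ Y, we have (x₁, y) ∈ R ↔ (x₂, y) ∈ R. Then R is a finite union of rectangles S ×ˢ T with S ⊆ ℕ and T ⊆ Y. -/
/-- Soundness of the decomposability criterion: if beyond a bound `B` the fibers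
of `R ⊆ ℕ × Y` agree for arguments congruent modulo every `k ∈ K`, then `R` is a
finite union of rectangles. -/
theorem stmt_9 {Y : Type*} (R : Set (ℕ × Y)) (B : ℕ) (K : Finset ℕ)
    (hK : ∀ k ∈ K, 0 < k)
    (h : ∀ x₁ x₂ : ℕ, B ≤ x₁ → B ≤ x₂ → (∀ k ∈ K, x₁ ≡ x₂ [MOD k]) →
      ∀ y : Y, ((x₁, y) ∈ R ↔ (x₂, y) ∈ R)) :
    ∃ (m : ℕ) (S : Fin m → Set ℕ) (T : Fin m → Set Y),
      R = ⋃ i, S i ×ˢ T i := by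
  set L : ℕ := K.lcm id with hL
  have hLpos : 0 < L := by
    rw [hL, Nat.pos_iff_ne_zero]
    intro h0
    rw [Finset.lcm_eq_zero_iff] at h0
    obtain ⟨k, hk, hk0⟩ := h0
    exact absurd hk0.symm (hK k hk).ne
  -- code function
  set c : ℕ → ℕ := fun x => if x < B then x else B + (x - B) % L with hc
  have hclt : ∀ x, c x < B + L := by
    intro x
    by_cases hx : x < B
    · simp [hc, hx]; omega
    · simp [hc, hx]
      exact Nat.mod_lt _ hLpos
  have hkey : ∀ x y, (x, y) ∈ R ↔ (c x, y) ∈ R := by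
    intro x y
    by_cases hx : x < B
    · simp [hc, hx]
    · push_neg at hx
      have hcx : c x = B + (x - B) % L := by simp [hc, Nat.not_lt.mpr hx]
      have hmod : ∀ k ∈ K, x ≡ c x [MOD k] := by
        intro k hk
        have hdvd : k ∣ L := Finset.dvd_lcm hk
        have : x ≡ B + (x - B) % L [MOD L] := by
          have h1 : x = B + (x - B) := by omega
          calc x = B + (x - B) := h1
            _ ≡ B + (x - B) % L [MOD L] :=
              (Nat.ModEq.refl B).add (Nat.mod_modEq _ _).symm
        rw [hcx]
        exact Nat.ModEq.of_dvd hdvd this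
      exact h x (c x) hx (by rw [hcx]; omega) hmod y
  refine ⟨B + L, fun i => {x | c x = i.val}, fun i => {y | (i.val, y) ∈ R}, ?_⟩
  ext ⟨x, y⟩
  simp only [Set.mem_iUnion, Set.mem_prod, Set.mem_setOf_eq]
  constructor
  · intro hxy
    exact ⟨⟨c x, hclt x⟩, rfl, (hkey x y).mp hxy⟩
  · rintro ⟨i, hi, hy⟩
    exact (hkey x y).mpr (hi ▸ hy)
end

section
/- Let Y be a type, k ∈ ℕ, S : Fin k → Set ℕ, T : Fin k → Set Y, and R = ⋃_{i<k} S_i ×ˢ T_i ⊆ ℕ × Y. Suppose each S_i is eventually periodic, i.e., there exist B_i ∈ ℕ and m_i > 0 such that for all x ≥ B_i, x ∈ S_i ↔ x + m_i ∈ S_i. Then there exist B ∈ ℕ and m > 0 such that for all x₁, x₂ ≥ B with x₁ ≡ x₂ (mod m) and all y ∈ Y, we have (x₁, y) ∈ R ↔ (x₂, y) ∈ R. -/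
private lemma aux_iter (S : Set ℕ) (B m : ℕ)
    (h : ∀ x : ℕ, B ≤ x → (x ∈ S ↔ x + m ∈ S)) :
    ∀ c x : ℕ, B ≤ x → (x ∈ S ↔ x + c * m ∈ S) := by
  intro c
  induction c with
  | zero => intro x hx; simp
  | succ n ih =>
    intro x hx
    have h1 := ih x hx
    have h2 := h (x + n * m) (le_trans hx (Nat.le_add_right _ _))
    rw [h1, h2]
    ring_nf

/-- Completeness of the decomposability criterion: if `R = ⋃_{i<k} S i ×ˢ T i`
with each `S i` eventually periodic, then there are a bound `B` and a period
`m > 0` such that the fibers of `R` agree on arguments `≥ B` that are congruent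
modulo `m`. -/
theorem stmt_10 {Y : Type*} (k : ℕ) (S : Fin k → Set ℕ) (T : Fin k → Set Y)
    (R : Set (ℕ × Y)) (hR : R = ⋃ i, S i ×ˢ T i)
    (hper : ∀ i : Fin k, ∃ (B : ℕ) (m : ℕ), 0 < m ∧
      ∀ x : ℕ, B ≤ x → (x ∈ S i ↔ x + m ∈ S i)) :
    ∃ (B : ℕ) (m : ℕ), 0 < m ∧
      ∀ x₁ x₂ : ℕ, B ≤ x₁ → B ≤ x₂ → x₁ ≡ x₂ [MOD m] →
        ∀ y : Y, ((x₁, y) ∈ R ↔ (x₂, y) ∈ R) := by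
  choose Bf mf hmf hSf using hper
  refine ⟨Finset.univ.sup Bf, ∏ i, mf i, Finset.prod_pos (fun i _ => hmf i), ?_⟩
  set m := ∏ i, mf i with hm
  -- key: each S i is periodic with period m above the global bound
  have key : ∀ (i : Fin k) (x c : ℕ), Finset.univ.sup Bf ≤ x →
      (x ∈ S i ↔ x + c * m ∈ S i) := by
    intro i x c hx
    obtain ⟨d, hd⟩ : mf i ∣ m := Finset.dvd_prod_of_mem _ (Finset.mem_univ i)
    have hB : Bf i ≤ x := le_trans (Finset.le_sup (Finset.mem_univ i)) hx
    have := aux_iter (S i) (Bf i) (mf i) (hSf i) (c * d) x hB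
    rw [hd] at *
    convert this using 3
    ring
  intro x₁ x₂ h₁ h₂ hmod y
  rcases le_total x₁ x₂ with h | h
  · obtain ⟨c, hc⟩ := (Nat.modEq_iff_dvd' h).mp hmod
    have hx2 : x₂ = x₁ + c * m := by rw [mul_comm c m]; omega
    subst hx2; subst hR
    simp only [Set.mem_iUnion, Set.mem_prod]
    exact exists_congr fun i => and_congr_left' (key i x₁ c h₁)
  · obtain ⟨c, hc⟩ := (Nat.modEq_iff_dvd' h).mp hmod.symm
    have hx1 : x₁ = x₂ + c * m := by rw [mul_comm c m]; omega
    subst hx1; subst hR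
    simp only [Set.mem_iUnion, Set.mem_prod]
    exact exists_congr fun i => and_congr_left' (key i x₂ c h₂).symm
end

section
/- Let L be the first-order language with a single binary function symbol and no other symbols, and regard ℕ as an L-structure by interpreting the binary function symbol as addition. Then every subset S ⊆ ℕ that is definable in this structure with parameters from ℕ is eventually periodic: there exist B ∈ ℕ and m > 0 such that for all x ≥ B, x ∈ S ↔ x + m ∈ S. -/
set_option linter.unusedSectionVars false
set_option maxHeartbeats 1000000

/-- The first-order language with a single binary function symbol and no other
symbols. -/
def addLang : FirstOrder.Language :=
  ⟨fun n => PLift (n = 2), fun _ => Empty⟩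

/-- `ℕ` as an `addLang`-structure, interpreting the binary function symbol as
addition. -/
instance natAddStructure : addLang.Structure ℕ where
  funMap {n} f x :=
    x ⟨0, by have h := f.down; omega⟩ + x ⟨1, by have h := f.down; omega⟩
  RelMap {n} r := r.elim

namespace Pres

structure Lin (ι : Type) where
  co : ι → ℤ
  k : ℤ

namespace Lin

variable {ι : Type} [Fintype ι]

def eval (f : Lin ι) (v : ι → ℕ) : ℤ := (∑ i, f.co i * (v i : ℤ)) + f.k

instance : Add (Lin ι) := ⟨fun f g => ⟨fun i => f.co i + g.co i, f.k + g.k⟩⟩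
instance : Neg (Lin ι) := ⟨fun f => ⟨fun i => -f.co i, -f.k⟩⟩

@[simp] theorem add_co (f g : Lin ι) (i : ι) : (f + g).co i = f.co i + g.co i := rfl
@[simp] theorem add_k (f g : Lin ι) : (f + g).k = f.k + g.k := rfl
@[simp] theorem neg_co (f : Lin ι) (i : ι) : (-f).co i = -f.co i := rfl
@[simp] theorem neg_k (f : Lin ι) : (-f).k = -f.k := rfl

def smul (c : ℤ) (f : Lin ι) : Lin ι := ⟨fun i => c * f.co i, c * f.k⟩

def cst (k : ℤ) : Lin ι := ⟨fun _ => 0, k⟩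

def single [DecidableEq ι] (i : ι) : Lin ι := ⟨fun j => if j = i then 1 else 0, 0⟩

@[simp] theorem eval_add (f g : Lin ι) (v : ι → ℕ) :
    (f + g).eval v = f.eval v + g.eval v := by
  simp only [eval, add_co, add_k, add_mul, Finset.sum_add_distrib]; ring

@[simp] theorem eval_neg (f : Lin ι) (v : ι → ℕ) : (-f).eval v = -f.eval v := by
  simp only [eval, neg_co, neg_k, neg_mul, Finset.sum_neg_distrib]; ring

@[simp] theorem eval_smul (c : ℤ) (f : Lin ι) (v : ι → ℕ) :
    (f.smul c).eval v = c * f.eval v := by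
  simp only [eval, smul, mul_add, Finset.mul_sum, mul_assoc]

@[simp] theorem eval_cst (k : ℤ) (v : ι → ℕ) : (cst k).eval v = k := by
  simp [eval, cst]

@[simp] theorem eval_single [DecidableEq ι] (i : ι) (v : ι → ℕ) :
    (single i).eval v = (v i : ℤ) := by
  simp [eval, single, Finset.sum_ite_eq']

end Lin

inductive NF (ι : Type) where
  | tru : NF ι
  | le (f : Lin ι) : NF ι
  | dvd (d : ℕ) (f : Lin ι) : NF ι
  | not (p : NF ι) : NF ι
  | and (p q : NF ι) : NF ι
  | or (p q : NF ι) : NF ι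

namespace NF

variable {ι : Type} [Fintype ι]

def sat : NF ι → (ι → ℕ) → Prop
  | tru, _ => True
  | le f, v => 0 ≤ f.eval v
  | dvd d f, v => ((max d 1 : ℕ) : ℤ) ∣ f.eval v
  | not p, v => ¬ p.sat v
  | and p q, v => p.sat v ∧ q.sat v
  | or p q, v => p.sat v ∨ q.sat v

def bigOr : List (NF ι) → NF ι
  | [] => not tru
  | p :: l => or p (bigOr l)

theorem sat_bigOr (l : List (NF ι)) (v : ι → ℕ) :
    (bigOr l).sat v ↔ ∃ p ∈ l, p.sat v := by
  induction l with
  | nil => simp [bigOr, sat]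
  | cons p l ih => simp [bigOr, sat, ih]

end NF

/-! ### Formulas with one separated (integer-valued) variable -/

inductive PF (ι : Type) where
  | tru : PF ι
  | fls : PF ι
  | le (a : ℤ) (t : Lin ι) : PF ι
  | dvd (b : Bool) (d : ℕ) (a : ℤ) (t : Lin ι) : PF ι
  | and (p q : PF ι) : PF ι
  | or (p q : PF ι) : PF ι

namespace PF

variable {ι : Type} [Fintype ι]

def sat : PF ι → (ι → ℕ) → ℤ → Prop
  | tru, _, _ => True
  | fls, _, _ => False
  | le a t, v, x => 0 ≤ a * x + t.eval v
  | dvd b d a t, v, x =>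
      if b then (((max d 1 : ℕ) : ℤ) ∣ a * x + t.eval v)
      else ¬ (((max d 1 : ℕ) : ℤ) ∣ a * x + t.eval v)
  | and p q, v, x => p.sat v x ∧ q.sat v x
  | or p q, v, x => p.sat v x ∨ q.sat v x

end PF

/-- Extend a valuation on `ι` to `Option ι`, sending `none` to `x`. -/
def ext {ι : Type} (v : ι → ℕ) (x : ℕ) : Option ι → ℕ := fun o => o.elim x v

section ToPF

variable {ι : Type} [Fintype ι]

/-- The restriction of a linear form on `Option ι` to `ι`. -/
def Lin.rest (f : Lin (Option ι)) : Lin ι := ⟨fun i => f.co (some i), f.k⟩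

theorem Lin.eval_ext (f : Lin (Option ι)) (v : ι → ℕ) (x : ℕ) :
    f.eval (ext v x) = f.co none * (x : ℤ) + f.rest.eval v := by
  simp only [Lin.eval, Lin.rest, Fintype.sum_option, ext, Option.elim]
  ring

/-- Negation-normal-form translation into a `PF`; the `Bool` is the polarity. -/
def toPF : NF (Option ι) → Bool → PF ι
  | .tru, true => .tru
  | .tru, false => .fls
  | .le f, true => .le (f.co none) f.rest
  | .le f, false => .le (-(f.co none)) (-(f.rest) + Lin.cst (-1))
  | .dvd d f, b => .dvd b d (f.co none) f.rest
  | .not p, b => toPF p (!b)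
  | .and p q, true => .and (toPF p true) (toPF q true)
  | .and p q, false => .or (toPF p false) (toPF q false)
  | .or p q, true => .or (toPF p true) (toPF q true)
  | .or p q, false => .and (toPF p false) (toPF q false)

theorem toPF_sat (φ : NF (Option ι)) (v : ι → ℕ) (x : ℕ) :
    ((toPF φ true).sat v (x : ℤ) ↔ φ.sat (ext v x)) ∧
    ((toPF φ false).sat v (x : ℤ) ↔ ¬ φ.sat (ext v x)) := by
  induction φ with
  | tru => simp [toPF, NF.sat, PF.sat]
  | le f =>
    constructor
    · simp [toPF, NF.sat, PF.sat, Lin.eval_ext]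
    · simp only [toPF, NF.sat, PF.sat, Lin.eval_add, Lin.eval_neg, Lin.eval_cst,
        Lin.eval_ext, not_le, neg_mul]
      omega
  | dvd d f =>
    constructor
    · simp [toPF, NF.sat, PF.sat, Lin.eval_ext]
    · simp [toPF, NF.sat, PF.sat, Lin.eval_ext]
  | not p ih =>
    exact ⟨by simpa [toPF, NF.sat] using ih.2, by simpa [toPF, NF.sat] using ih.1⟩
  | and p q ihp ihq =>
    constructor
    · simp [toPF, NF.sat, PF.sat, ihp.1, ihq.1]
    · simp only [toPF, NF.sat, PF.sat, ihp.2, ihq.2]; tauto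
  | or p q ihp ihq =>
    constructor
    · simp [toPF, NF.sat, PF.sat, ihp.1, ihq.1]
    · simp only [toPF, NF.sat, PF.sat, ihp.2, ihq.2]; tauto

end ToPF

/-! ### Coefficient normalization -/

namespace PF

variable {ι : Type} [Fintype ι]

/-- Product of the (absolute values of the) coefficients of the separated
variable. -/
def coP : PF ι → ℕ
  | le a _ => max a.natAbs 1
  | dvd _ _ a _ => max a.natAbs 1
  | and p q => coP p * coP q
  | or p q => coP p * coP q
  | _ => 1

theorem coP_pos (φ : PF ι) : 0 < coP φ := by
  induction φ with
  | and p q ihp ihq => exact Nat.mul_pos ihp ihq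
  | or p q ihp ihq => exact Nat.mul_pos ihp ihq
  | tru => exact Nat.one_pos
  | fls => exact Nat.one_pos
  | le a t => exact lt_of_lt_of_le Nat.one_pos (le_max_right _ _)
  | dvd b d a t => exact lt_of_lt_of_le Nat.one_pos (le_max_right _ _)

/-- All coefficients of the separated variable divide `P`. -/
def coeffDvd (P : ℕ) : PF ι → Prop
  | le a _ => a = 0 ∨ a.natAbs ∣ P
  | dvd _ _ a _ => a = 0 ∨ a.natAbs ∣ P
  | and p q => coeffDvd P p ∧ coeffDvd P q
  | or p q => coeffDvd P p ∧ coeffDvd P q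
  | _ => True

theorem coeffDvd_mono {P Q : ℕ} (h : P ∣ Q) :
    ∀ φ : PF ι, coeffDvd P φ → coeffDvd Q φ := by
  intro φ
  induction φ with
  | le a t => exact fun hc => hc.imp id (fun h' => h'.trans h)
  | dvd b d a t => exact fun hc => hc.imp id (fun h' => h'.trans h)
  | and p q ihp ihq => exact fun hc => ⟨ihp hc.1, ihq hc.2⟩
  | or p q ihp ihq => exact fun hc => ⟨ihp hc.1, ihq hc.2⟩
  | tru => exact fun _ => trivial
  | fls => exact fun _ => trivial

theorem coeffDvd_coP (φ : PF ι) : coeffDvd (coP φ) φ := by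
  induction φ with
  | le a t =>
    by_cases h : a = 0
    · exact Or.inl h
    · exact Or.inr (by
        simp only [coP]
        exact dvd_of_eq (max_eq_left (Nat.one_le_iff_ne_zero.2 (Int.natAbs_ne_zero.2 h))).symm)
  | dvd b d a t =>
    by_cases h : a = 0
    · exact Or.inl h
    · exact Or.inr (by
        simp only [coP]
        exact dvd_of_eq (max_eq_left (Nat.one_le_iff_ne_zero.2 (Int.natAbs_ne_zero.2 h))).symm)
  | and p q ihp ihq =>
    exact ⟨coeffDvd_mono (dvd_mul_right _ _) p ihp, coeffDvd_mono (dvd_mul_left _ _) q ihq⟩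
  | or p q ihp ihq =>
    exact ⟨coeffDvd_mono (dvd_mul_right _ _) p ihp, coeffDvd_mono (dvd_mul_left _ _) q ihq⟩
  | tru => trivial
  | fls => trivial

/-- Rescale all literals so that the separated variable has coefficient in
`{-1, 0, 1}` relative to the substitution `x ↦ P·x`. -/
def unitize (P : ℕ) : PF ι → PF ι
  | le a t => if a = 0 then le a t else le a.sign (t.smul ((P / a.natAbs : ℕ) : ℤ))
  | dvd b d a t =>
      if a = 0 then dvd b d a t
      else dvd b ((max d 1) * (P / a.natAbs)) a.sign (t.smul ((P / a.natAbs : ℕ) : ℤ))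
  | and p q => and (unitize P p) (unitize P q)
  | or p q => or (unitize P p) (unitize P q)
  | tru => tru
  | fls => fls

/-- All coefficients of the separated variable lie in `{-1, 0, 1}`. -/
def isUnit : PF ι → Prop
  | le a _ => a.natAbs ≤ 1
  | dvd _ _ a _ => a.natAbs ≤ 1
  | and p q => isUnit p ∧ isUnit q
  | or p q => isUnit p ∧ isUnit q
  | _ => True

theorem natAbs_sign_le (a : ℤ) : a.sign.natAbs ≤ 1 := by
  rcases lt_trichotomy a 0 with h | h | h
  · rw [Int.sign_eq_neg_one_of_neg h]; decide
  · rw [h]; decide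
  · rw [Int.sign_eq_one_of_pos h]; decide

theorem isUnit_unitize (P : ℕ) (φ : PF ι) : isUnit (unitize P φ) := by
  induction φ with
  | le a t =>
    by_cases h : a = 0
    · simp [unitize, h, isUnit]
    · simp only [unitize, if_neg h, isUnit]; exact natAbs_sign_le a
  | dvd b d a t =>
    by_cases h : a = 0
    · simp [unitize, h, isUnit]
    · simp only [unitize, if_neg h, isUnit]; exact natAbs_sign_le a
  | and p q ihp ihq => exact ⟨ihp, ihq⟩
  | or p q ihp ihq => exact ⟨ihp, ihq⟩
  | tru => trivial
  | fls => trivial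

theorem unitize_sat {P : ℕ} (hP : 0 < P) {φ : PF ι} (hc : coeffDvd P φ)
    (v : ι → ℕ) (x : ℤ) : (unitize P φ).sat v ((P : ℤ) * x) ↔ φ.sat v x := by
  induction φ with
  | tru => simp [unitize, sat]
  | fls => simp [unitize, sat]
  | le a t =>
    by_cases h : a = 0
    · subst h; simp [unitize, sat]
    · rcases hc with h0 | hdvd
      · exact absurd h0 h
      have hna : 0 < a.natAbs := Int.natAbs_pos.2 h
      set m : ℕ := P / a.natAbs with hm
      have hmP : m * a.natAbs = P := Nat.div_mul_cancel hdvd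
      have hmpos : 0 < m := by
        rcases Nat.eq_zero_or_pos m with h' | h'
        · exfalso; rw [h'] at hmP; omega
        · exact h'
      have key : (m : ℤ) * (a * x + t.eval v)
          = a.sign * ((P : ℤ) * x) + (m : ℤ) * t.eval v := by
        have : (m : ℤ) * a = a.sign * (P : ℤ) := by
          conv_lhs => rw [← Int.sign_mul_natAbs a]
          push_cast [← hmP]
          ring
        calc (m : ℤ) * (a * x + t.eval v) = ((m : ℤ) * a) * x + (m : ℤ) * t.eval v := by ring
        _ = a.sign * ((P : ℤ) * x) + (m : ℤ) * t.eval v := by rw [this]; ring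
      simp only [unitize, if_neg h, sat, Lin.eval_smul]
      rw [← key]
      exact mul_nonneg_iff_of_pos_left (by exact_mod_cast hmpos)
  | dvd b d a t =>
    by_cases h : a = 0
    · subst h; simp [unitize, sat]
    · rcases hc with h0 | hdvd
      · exact absurd h0 h
      have hna : 0 < a.natAbs := Int.natAbs_pos.2 h
      set m : ℕ := P / a.natAbs with hm
      have hmP : m * a.natAbs = P := Nat.div_mul_cancel hdvd
      have hmpos : 0 < m := by
        rcases Nat.eq_zero_or_pos m with h' | h'
        · exfalso; rw [h'] at hmP; omega
        · exact h'
      have key : (m : ℤ) * (a * x + t.eval v)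
          = a.sign * ((P : ℤ) * x) + (m : ℤ) * t.eval v := by
        have : (m : ℤ) * a = a.sign * (P : ℤ) := by
          conv_lhs => rw [← Int.sign_mul_natAbs a]
          push_cast [← hmP]
          ring
        calc (m : ℤ) * (a * x + t.eval v) = ((m : ℤ) * a) * x + (m : ℤ) * t.eval v := by ring
        _ = a.sign * ((P : ℤ) * x) + (m : ℤ) * t.eval v := by rw [this]; ring
      have hdm : max ((max d 1) * m) 1 = (max d 1) * m := by
        have : 1 ≤ (max d 1) * m := Nat.one_le_iff_ne_zero.2 (by positivity)
        omega
      have main : (((max ((max d 1) * m) 1 : ℕ) : ℤ) ∣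
            a.sign * ((P : ℤ) * x) + (t.smul (m : ℤ)).eval v)
          ↔ (((max d 1 : ℕ) : ℤ) ∣ a * x + t.eval v) := by
        rw [hdm, Lin.eval_smul, ← key, Nat.cast_mul, mul_comm ((max d 1 : ℕ) : ℤ) (m : ℤ)]
        exact mul_dvd_mul_iff_left (by exact_mod_cast hmpos.ne' : (m : ℤ) ≠ 0)
      simp only [unitize, if_neg h, sat]
      cases b
      · simp only [if_neg Bool.false_ne_true, main]; exact not_congr main
      · simp only [if_pos rfl, ↓reduceIte]; exact main
  | and p q ihp ihq => exact and_congr (ihp hc.1) (ihq hc.2)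
  | or p q ihp ihq => exact or_congr (ihp hc.1) (ihq hc.2)

end PF

/-! ### Cooper elimination for unit formulas -/

namespace PF

variable {ι : Type} [Fintype ι]

/-- Least common multiple of all moduli. -/
def divlcm : PF ι → ℕ
  | dvd _ d _ _ => max d 1
  | and p q => Nat.lcm (divlcm p) (divlcm q)
  | or p q => Nat.lcm (divlcm p) (divlcm q)
  | _ => 1

theorem divlcm_pos (φ : PF ι) : 0 < divlcm φ := by
  induction φ with
  | and p q ihp ihq => exact Nat.lcm_pos ihp ihq
  | or p q ihp ihq => exact Nat.lcm_pos ihp ihq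
  | dvd b d a t => exact lt_of_lt_of_le Nat.one_pos (le_max_right _ _)
  | tru => exact Nat.one_pos
  | fls => exact Nat.one_pos
  | le a t => exact Nat.one_pos

/-- All moduli divide `D`. -/
def divDvd (D : ℕ) : PF ι → Prop
  | dvd _ d _ _ => (max d 1) ∣ D
  | and p q => divDvd D p ∧ divDvd D q
  | or p q => divDvd D p ∧ divDvd D q
  | _ => True

theorem divDvd_mono {D D' : ℕ} (h : D ∣ D') :
    ∀ φ : PF ι, divDvd D φ → divDvd D' φ := by
  intro φ
  induction φ with
  | dvd b d a t => exact fun hc => hc.trans h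
  | and p q ihp ihq => exact fun hc => ⟨ihp hc.1, ihq hc.2⟩
  | or p q ihp ihq => exact fun hc => ⟨ihp hc.1, ihq hc.2⟩
  | tru => exact fun _ => trivial
  | fls => exact fun _ => trivial
  | le a t => exact fun _ => trivial

theorem divDvd_divlcm (φ : PF ι) : divDvd (divlcm φ) φ := by
  induction φ with
  | dvd b d a t => exact dvd_refl _
  | and p q ihp ihq =>
    exact ⟨divDvd_mono (Nat.dvd_lcm_left _ _) p ihp,
      divDvd_mono (Nat.dvd_lcm_right _ _) q ihq⟩
  | or p q ihp ihq =>
    exact ⟨divDvd_mono (Nat.dvd_lcm_left _ _) p ihp,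
      divDvd_mono (Nat.dvd_lcm_right _ _) q ihq⟩
  | tru => trivial
  | fls => trivial
  | le a t => trivial

/-- Lower-boundary terms: `t` for each literal `0 ≤ x + t`. -/
def lbs : PF ι → List (Lin ι)
  | le a t => if a = 1 then [t] else []
  | and p q => lbs p ++ lbs q
  | or p q => lbs p ++ lbs q
  | _ => []

/-- Substitute the linear form `u` for the separated variable. -/
def subst (u : Lin ι) : PF ι → NF ι
  | tru => NF.tru
  | fls => NF.not NF.tru
  | le a t => NF.le (u.smul a + t)
  | dvd b d a t =>
      if b then NF.dvd d (u.smul a + t) else NF.not (NF.dvd d (u.smul a + t))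
  | and p q => NF.and (subst u p) (subst u q)
  | or p q => NF.or (subst u p) (subst u q)

theorem subst_sat (u : Lin ι) (φ : PF ι) (v : ι → ℕ) :
    (subst u φ).sat v ↔ φ.sat v (u.eval v) := by
  induction φ with
  | tru => simp [subst, NF.sat, sat]
  | fls => simp [subst, NF.sat, sat]
  | le a t => simp [subst, NF.sat, sat]
  | dvd b d a t =>
    cases b
    · simp [subst, NF.sat, sat]
    · simp [subst, NF.sat, sat]
  | and p q ihp ihq => exact and_congr ihp ihq
  | or p q ihp ihq => exact or_congr ihp ihq

/-- The key descent lemma: a unit formula satisfied at `x` is satisfied at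
`x - D` unless `x` is within `D` above some lower boundary. -/
theorem descent {φ : PF ι} (hu : isUnit φ) {D : ℕ} (hD : divDvd D φ)
    (v : ι → ℕ) (x : ℤ) (hs : φ.sat v x)
    (hnc : ∀ t ∈ lbs φ, ¬ (-(t.eval v) ≤ x ∧ x < -(t.eval v) + D)) :
    φ.sat v (x - D) := by
  induction φ with
  | tru => trivial
  | fls => exact hs.elim
  | le a t =>
    have hu' : a.natAbs ≤ 1 := hu
    have ha : a = -1 ∨ a = 0 ∨ a = 1 := by omega
    rcases ha with h | h | h
    · subst h
      simp only [sat] at hs ⊢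
      omega
    · subst h
      simp only [sat] at hs ⊢
      omega
    · subst h
      have hmem : t ∈ lbs (le 1 t) := by simp [lbs]
      have := hnc t hmem
      simp only [sat] at hs ⊢
      omega
  | dvd b d a t =>
    have hD' : (max d 1) ∣ D := hD
    have hdv : ((max d 1 : ℕ) : ℤ) ∣ a * D :=
      Dvd.dvd.mul_left (Int.natCast_dvd_natCast.mpr hD') a
    have hrw : a * (x - D) + t.eval v = (a * x + t.eval v) - a * D := by ring
    simp only [sat] at hs ⊢
    cases b
    · simp only [if_neg Bool.false_ne_true] at hs ⊢
      intro hnew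
      apply hs
      have := dvd_add hnew hdv
      rw [hrw] at this
      simpa using this
    · simp only [if_pos rfl] at hs ⊢
      rw [hrw]
      exact dvd_sub hs hdv
  | and p q ihp ihq =>
    exact ⟨ihp hu.1 hD.1 hs.1 (fun t ht => hnc t (List.mem_append_left _ ht)),
      ihq hu.2 hD.2 hs.2 (fun t ht => hnc t (List.mem_append_right _ ht))⟩
  | or p q ihp ihq =>
    rcases hs with hs | hs
    · exact Or.inl (ihp hu.1 hD.1 hs (fun t ht => hnc t (List.mem_append_left _ ht)))
    · exact Or.inr (ihq hu.2 hD.2 hs (fun t ht => hnc t (List.mem_append_right _ ht)))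

/-- The Cooper disjunction. -/
def coreList (φ : PF ι) : List (NF ι) :=
  (List.range (divlcm φ)).flatMap fun (j : ℕ) =>
    subst (Lin.cst j) φ ::
      (lbs φ).map fun t => NF.and (NF.le (-t + Lin.cst j)) (subst (-t + Lin.cst j) φ)

theorem cooper_core {φ : PF ι} (hu : isUnit φ) (v : ι → ℕ) :
    (∃ x : ℕ, φ.sat v (x : ℤ)) ↔ (NF.bigOr (coreList φ)).sat v := by
  rw [NF.sat_bigOr]
  constructor
  · rintro ⟨x, hx⟩
    -- take a minimal witness
    classical
    have hex : ∃ n : ℕ, φ.sat v (n : ℤ) := ⟨x, hx⟩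
    set x0 := Nat.find hex with hx0def
    have hx0 : φ.sat v (x0 : ℤ) := Nat.find_spec hex
    have hmin : ∀ y : ℕ, y < x0 → ¬ φ.sat v (y : ℤ) := fun y hy => Nat.find_min hex hy
    set D := divlcm φ with hDdef
    have hDpos : 0 < D := divlcm_pos φ
    by_cases hcr : ∃ t ∈ lbs φ, -(t.eval v) ≤ (x0 : ℤ) ∧ (x0 : ℤ) < -(t.eval v) + D
    · rcases hcr with ⟨t, ht, h1, h2⟩
      set j : ℕ := ((x0 : ℤ) + t.eval v).toNat with hjdef
      have hj : (j : ℤ) = (x0 : ℤ) + t.eval v := Int.toNat_of_nonneg (by omega)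
      have hjD : j < D := by omega
      have heval : (-t + Lin.cst (j : ℤ)).eval v = (x0 : ℤ) := by
        simp [Lin.eval_add, Lin.eval_neg, Lin.eval_cst]; omega
      refine ⟨NF.and (NF.le (-t + Lin.cst (j : ℤ))) (subst (-t + Lin.cst (j : ℤ)) φ), ?_, ?_⟩
      · simp only [coreList, List.mem_flatMap, List.mem_range]
        exact ⟨j, hjD, by
          simp only [List.mem_cons, List.mem_map]
          exact Or.inr ⟨t, ht, rfl⟩⟩
      · constructor
        · simp only [NF.sat, heval]; positivity
        · rw [subst_sat, heval]; exact hx0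
    · push_neg at hcr
      by_cases hxD : x0 < D
      · refine ⟨subst (Lin.cst (x0 : ℤ)) φ, ?_, ?_⟩
        · simp only [coreList, List.mem_flatMap, List.mem_range]
          exact ⟨x0, hxD, List.mem_cons_self⟩
        · rw [subst_sat, Lin.eval_cst]; exact hx0
      · exfalso
        push_neg at hxD
        have hdesc := descent hu (divDvd_divlcm φ) v (x0 : ℤ) hx0
          (by intro t ht hc; exact absurd hc.2 (not_lt.2 (hcr t ht hc.1)))
        have hcast : ((x0 - D : ℕ) : ℤ) = (x0 : ℤ) - D := by
          omega
        rw [← hcast] at hdesc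
        exact hmin (x0 - D) (by omega) hdesc
  · rintro ⟨p, hp, hsat⟩
    simp only [coreList, List.mem_flatMap, List.mem_range, List.mem_cons, List.mem_map] at hp
    rcases hp with ⟨j, hj, rfl | ⟨t, ht, rfl⟩⟩
    · rw [subst_sat, Lin.eval_cst] at hsat
      exact ⟨j, hsat⟩
    · rcases hsat with ⟨h1, h2⟩
      rw [subst_sat] at h2
      simp only [NF.sat] at h1
      refine ⟨((-t + Lin.cst (j : ℤ)).eval v).toNat, ?_⟩
      rw [Int.toNat_of_nonneg h1]
      exact h2

end PF

/-! ### Existential elimination on `NF` -/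

section ExElim

variable {ι : Type} [Fintype ι]

/-- Eliminate an existential quantifier (over `ℕ`) for the `none` variable. -/
def exElim (φ : NF (Option ι)) : NF ι :=
  let p := toPF φ true
  let P := p.coP
  let q := PF.and (PF.dvd true P 1 (Lin.cst 0)) (p.unitize P)
  NF.bigOr (PF.coreList q)

theorem exElim_sat (φ : NF (Option ι)) (v : ι → ℕ) :
    (exElim φ).sat v ↔ ∃ x : ℕ, φ.sat (ext v x) := by
  set p := toPF φ true with hp
  set P := p.coP with hP
  have hPpos : 0 < P := p.coP_pos
  set q := PF.and (PF.dvd true P 1 (Lin.cst 0)) (p.unitize P) with hq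
  have hqunit : q.isUnit := by
    constructor
    · show (1 : ℤ).natAbs ≤ 1
      decide
    · exact p.isUnit_unitize P
  have step1 : ∀ x : ℕ, p.sat v (x : ℤ) ↔ φ.sat (ext v x) :=
    fun x => (toPF_sat φ v x).1
  have step2 : (∃ y : ℕ, q.sat v (y : ℤ)) ↔ ∃ x : ℕ, p.sat v (x : ℤ) := by
    constructor
    · rintro ⟨y, hy1, hy2⟩
      simp only [PF.sat, if_pos rfl, one_mul, Lin.eval_cst, add_zero] at hy1
      have hmax : max P 1 = P := max_eq_left hPpos
      rw [hmax] at hy1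
      have : P ∣ y := by exact_mod_cast hy1
      rcases this with ⟨x, rfl⟩
      refine ⟨x, ?_⟩
      rw [← PF.unitize_sat hPpos (PF.coeffDvd_coP p) v (x : ℤ)]
      have hcast : ((P * x : ℕ) : ℤ) = (P : ℤ) * (x : ℤ) := by push_cast; ring
      rw [hcast] at hy2
      exact hy2
    · rintro ⟨x, hx⟩
      refine ⟨P * x, ?_, ?_⟩
      · simp only [PF.sat, if_pos rfl, one_mul, Lin.eval_cst, add_zero]
        have hmax : max P 1 = P := max_eq_left hPpos
        rw [hmax]
        exact_mod_cast Dvd.intro x rfl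
      · have := (PF.unitize_sat hPpos (PF.coeffDvd_coP p) v (x : ℤ)).2 hx
        have hcast : ((P * x : ℕ) : ℤ) = (P : ℤ) * (x : ℤ) := by push_cast; ring
        rw [hcast]
        exact this
  calc (exElim φ).sat v ↔ ∃ y : ℕ, q.sat v (y : ℤ) := (PF.cooper_core hqunit v).symm
    _ ↔ ∃ x : ℕ, p.sat v (x : ℤ) := step2
    _ ↔ ∃ x : ℕ, φ.sat (ext v x) := exists_congr step1

end ExElim

/-! ### Reindexing -/

section Remap

variable {κ ι : Type} [Fintype ι] [Fintype κ]

def Lin.remap (e : κ ≃ ι) (f : Lin ι) : Lin κ := ⟨f.co ∘ e, f.k⟩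

theorem Lin.eval_remap (e : κ ≃ ι) (f : Lin ι) (w : κ → ℕ) :
    (f.remap e).eval w = f.eval (w ∘ e.symm) := by
  simp only [Lin.eval, Lin.remap, Function.comp]
  congr 1
  exact Fintype.sum_equiv e (fun j => f.co (e j) * (w j : ℤ))
    (fun i => f.co i * (w (e.symm i) : ℤ)) (fun j => by simp)

def NF.remap (e : κ ≃ ι) : NF ι → NF κ
  | .tru => .tru
  | .le f => .le (f.remap e)
  | .dvd d f => .dvd d (f.remap e)
  | .not p => .not (p.remap e)
  | .and p q => .and (p.remap e) (q.remap e)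
  | .or p q => .or (p.remap e) (q.remap e)

theorem NF.sat_remap (e : κ ≃ ι) (φ : NF ι) (w : κ → ℕ) :
    (φ.remap e).sat w ↔ φ.sat (w ∘ e.symm) := by
  induction φ with
  | tru => simp [remap, sat]
  | le f => simp [remap, sat, Lin.eval_remap]
  | dvd d f => simp [remap, sat, Lin.eval_remap]
  | not p ih => exact not_congr ih
  | and p q ihp ihq => exact and_congr ihp ihq
  | or p q ihp ihq => exact or_congr ihp ihq

end Remap

/-- The equivalence sending `none` to the new last variable. -/
def sumOptEquiv (n : ℕ) : Option (Fin 1 ⊕ Fin n) ≃ (Fin 1 ⊕ Fin (n + 1)) where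
  toFun o := o.elim (Sum.inr (Fin.last n)) (Sum.map id Fin.castSucc)
  invFun s :=
    Sum.elim (fun i => some (Sum.inl i))
      (fun j => Fin.lastCases none (fun i => some (Sum.inr i)) j) s
  left_inv := by
    rintro (_ | (i | j)) <;> simp [Sum.map]
  right_inv := by
    rintro (i | j)
    · simp
    · refine Fin.lastCases ?_ (fun i => ?_) j <;> simp

theorem ext_comp_sumOptEquiv {n : ℕ} (v : Fin 1 → ℕ) (xs : Fin n → ℕ) (x : ℕ) :
    (ext (Sum.elim v xs) x) ∘ ((sumOptEquiv n).symm : (Fin 1 ⊕ Fin (n + 1)) → Option (Fin 1 ⊕ Fin n))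
      = Sum.elim v (Fin.snoc xs x) := by
  funext s
  rcases s with i | j
  · rfl
  · refine Fin.lastCases ?_ (fun i => ?_) j
    · simp [sumOptEquiv, ext, Fin.snoc_last]
    · simp [sumOptEquiv, ext, Fin.snoc_castSucc]

/-! ### Translation of first-order formulas -/

open FirstOrder FirstOrder.Language

end Pres

namespace Pres

open FirstOrder FirstOrder.Language

section Translate

/-- The language with constants added. -/
abbrev Lc : FirstOrder.Language := addLang[[(Set.univ : Set ℕ)]]

variable (hadd : ∀ (h : (2:ℕ) = 2) (r : Fin 2 → ℕ),
      Structure.funMap (L := Lc) (Sum.inl (PLift.up h)) r = r 0 + r 1)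

include hadd

theorem term_lin {ι : Type} [Fintype ι] [DecidableEq ι] (t : Lc.Term ι) :
    ∃ f : Lin ι, ∀ w : ι → ℕ, f.eval w = ((t.realize w : ℕ) : ℤ) := by
  induction t with
  | var i => exact ⟨Lin.single i, fun w => by simp [Term.realize]⟩
  | @func l f ts ih =>
    rcases f with f | c
    · obtain ⟨h⟩ := f
      subst h
      obtain ⟨f0, hf0⟩ := ih 0
      obtain ⟨f1, hf1⟩ := ih 1
      refine ⟨f0 + f1, fun w => ?_⟩
      have : Term.realize w (Term.func (Sum.inl (PLift.up rfl : addLang.Functions 2)) ts)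
          = (ts 0).realize w + (ts 1).realize w := by
        simp only [Term.realize]
        exact hadd rfl _
      refine Eq.trans ?_ (congrArg (fun n : ℕ => (n : ℤ)) this).symm
      push_cast
      rw [Lin.eval_add, hf0, hf1]
    · match l, c with
      | 0, c =>
        refine ⟨Lin.cst ((c : ℕ) : ℤ), fun w => ?_⟩
        simp only [Lin.eval_cst, Term.realize, funMap_sumInr]
        rfl

theorem bf_nf : ∀ {n : ℕ} (φ : Lc.BoundedFormula (Fin 1) n),
    ∃ ψ : NF ((Fin 1) ⊕ (Fin n)), ∀ (v : Fin 1 → ℕ) (xs : Fin n → ℕ),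
      ψ.sat (Sum.elim v xs) ↔ φ.Realize v xs := by
  intro n φ
  induction φ with
  | falsum => exact ⟨NF.not NF.tru, fun v xs => by simp [NF.sat, BoundedFormula.Realize]⟩
  | @equal n t₁ t₂ =>
    obtain ⟨f₁, hf₁⟩ := term_lin hadd t₁
    obtain ⟨f₂, hf₂⟩ := term_lin hadd t₂
    refine ⟨NF.and (NF.le (f₁ + -f₂)) (NF.le (f₂ + -f₁)), fun v xs => ?_⟩
    simp only [NF.sat, Lin.eval_add, Lin.eval_neg, hf₁, hf₂,
      BoundedFormula.realize_bdEqual]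
    constructor
    · rintro ⟨h1, h2⟩
      have : ((t₁.realize (Sum.elim v xs) : ℕ) : ℤ) = ((t₂.realize (Sum.elim v xs) : ℕ) : ℤ) := by omega
      exact_mod_cast this
    · intro h
      rw [h]
      omega
  | @rel n l R ts => exact R.elim (fun e => e.elim) (fun e => e.elim)
  | @imp n φ₁ φ₂ ih₁ ih₂ =>
    obtain ⟨ψ₁, hψ₁⟩ := ih₁
    obtain ⟨ψ₂, hψ₂⟩ := ih₂
    refine ⟨NF.or (NF.not ψ₁) ψ₂, fun v xs => ?_⟩
    simp only [NF.sat, hψ₁, hψ₂, BoundedFormula.realize_imp]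
    tauto
  | @all n φ' ih =>
    obtain ⟨ψ, hψ⟩ := ih
    refine ⟨NF.not (exElim (NF.remap (sumOptEquiv n) (NF.not ψ))), fun v xs => ?_⟩
    have key : ∀ x : ℕ,
        (NF.remap (sumOptEquiv n) (NF.not ψ)).sat (ext (Sum.elim v xs) x)
          ↔ ¬ φ'.Realize v (Fin.snoc xs x) := by
      intro x
      rw [NF.sat_remap, ext_comp_sumOptEquiv]
      exact not_congr (hψ v (Fin.snoc xs x))
    show ¬ (exElim _).sat _ ↔ _
    rw [exElim_sat, BoundedFormula.realize_all]
    constructor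
    · intro h x
      by_contra hc
      exact h ⟨x, (key x).2 hc⟩
    · rintro h ⟨x, hx⟩
      exact ((key x).1 hx) (h x)

end Translate

end Pres


namespace Pres

/-- One-dimensional valuation. -/
def val (x : ℕ) : (Fin 1 ⊕ Fin 0) → ℕ := Sum.elim (fun _ => x) Fin.elim0

theorem Lin.eval_val (f : Lin (Fin 1 ⊕ Fin 0)) (x : ℕ) :
    f.eval (val x) = f.co (Sum.inl 0) * (x : ℤ) + f.k := by
  simp [Lin.eval, Fintype.sum_sum_type, val]

theorem iterate_per {P : ℕ → Prop} {B m : ℕ} (h : ∀ x, B ≤ x → (P x ↔ P (x + m))) :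
    ∀ (k x : ℕ), B ≤ x → (P x ↔ P (x + m * k)) := by
  intro k
  induction k with
  | zero => simp
  | succ k ih =>
    intro x hx
    rw [ih x hx, Nat.mul_succ, ← Nat.add_assoc]
    exact h (x + m * k) (by omega)

theorem NF.eventually_periodic (ψ : NF (Fin 1 ⊕ Fin 0)) :
    ∃ B m : ℕ, 0 < m ∧ ∀ x : ℕ, B ≤ x → (ψ.sat (val x) ↔ ψ.sat (val (x + m))) := by
  induction ψ with
  | tru => exact ⟨0, 1, Nat.one_pos, fun x _ => Iff.rfl⟩
  | le f =>
    set a := f.co (Sum.inl 0) with ha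
    rcases lt_trichotomy a 0 with h | h | h
    · refine ⟨f.k.natAbs + 1, 1, Nat.one_pos, fun x hx => ?_⟩
      have key : ∀ y : ℕ, f.k.natAbs + 1 ≤ y → ¬ (0 ≤ a * (y : ℤ) + f.k) := by
        intro y hy
        have h1 : a * (y : ℤ) ≤ -(y : ℤ) := by
          have := mul_le_mul_of_nonneg_right (show a ≤ -1 by omega)
            (show (0 : ℤ) ≤ (y : ℤ) by positivity)
          simpa using this
        omega
      simp only [sat, Lin.eval_val, ← ha]
      exact iff_of_false (key x hx) (key (x + 1) (by omega))
    · refine ⟨0, 1, Nat.one_pos, fun x _ => ?_⟩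
      simp [sat, Lin.eval_val, ← ha, h]
    · refine ⟨f.k.natAbs, 1, Nat.one_pos, fun x hx => ?_⟩
      have key : ∀ y : ℕ, f.k.natAbs ≤ y → (0 ≤ a * (y : ℤ) + f.k) := by
        intro y hy
        have h1 : (y : ℤ) ≤ a * (y : ℤ) := le_mul_of_one_le_left (by positivity) (by omega)
        omega
      simp only [sat, Lin.eval_val, ← ha]
      exact iff_of_true (key x hx) (key (x + 1) (by omega))
  | dvd d f =>
    set M : ℕ := max d 1 with hM
    refine ⟨0, M, lt_of_lt_of_le Nat.one_pos (le_max_right _ _), fun x _ => ?_⟩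
    simp only [sat, Lin.eval_val, ← hM]
    have hrw : f.co (Sum.inl 0) * ((x + M : ℕ) : ℤ) + f.k
        = (f.co (Sum.inl 0) * (x : ℤ) + f.k) + f.co (Sum.inl 0) * (M : ℤ) := by
      push_cast
      ring
    have hd : ((M : ℕ) : ℤ) ∣ f.co (Sum.inl 0) * (M : ℤ) := Dvd.dvd.mul_left dvd_rfl _
    rw [hrw]
    exact ⟨fun h => dvd_add h hd, fun h => by simpa using dvd_sub h hd⟩
  | not p ih =>
    obtain ⟨B, m, hm, hper⟩ := ih
    exact ⟨B, m, hm, fun x hx => not_congr (hper x hx)⟩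
  | and p q ihp ihq =>
    obtain ⟨Bp, mp, hmp, hp⟩ := ihp
    obtain ⟨Bq, mq, hmq, hq⟩ := ihq
    refine ⟨max Bp Bq, mp * mq, Nat.mul_pos hmp hmq, fun x hx => ?_⟩
    have h1 := iterate_per hp mq x (le_trans (le_max_left _ _) hx)
    have h2 := iterate_per hq mp x (le_trans (le_max_right _ _) hx)
    rw [Nat.mul_comm mq mp] at h2
    exact and_congr h1 h2
  | or p q ihp ihq =>
    obtain ⟨Bp, mp, hmp, hp⟩ := ihp
    obtain ⟨Bq, mq, hmq, hq⟩ := ihq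
    refine ⟨max Bp Bq, mp * mq, Nat.mul_pos hmp hmq, fun x hx => ?_⟩
    have h1 := iterate_per hp mq x (le_trans (le_max_left _ _) hx)
    have h2 := iterate_per hq mp x (le_trans (le_max_right _ _) hx)
    rw [Nat.mul_comm mq mp] at h2
    exact or_congr h1 h2

end Pres

/-- Every subset of `ℕ` definable with parameters in the structure `(ℕ, +)` is
eventually periodic. -/
theorem stmt_11 (S : Set ℕ) (hS : (Set.univ : Set ℕ).Definable₁ addLang S) :
    ∃ (B m : ℕ), 0 < m ∧ ∀ x : ℕ, B ≤ x → (x ∈ S ↔ x + m ∈ S) := by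
  obtain ⟨φ, hφ⟩ := hS
  obtain ⟨ψ, hψ⟩ := Pres.bf_nf (fun h r => rfl) φ
  obtain ⟨B, m, hm, hper⟩ := ψ.eventually_periodic
  have hmem : ∀ y : ℕ, (y ∈ S) ↔ ψ.sat (Pres.val y) := by
    intro y
    have hval : ∀ xs : Fin 0 → ℕ, Sum.elim (fun _ => y) xs = Pres.val y := by
      intro xs
      funext s
      rcases s with i | j
      · rfl
      · exact j.elim0
    have h1 : (y ∈ S) ↔ ((fun _ => y) : Fin 1 → ℕ) ∈ {x : Fin 1 → ℕ | x 0 ∈ S} := Iff.rfl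
    rw [h1, hφ, Set.mem_setOf_eq]
    exact ((hψ (fun _ => y) _).symm.trans
      (iff_of_eq (congrArg ψ.sat (hval _))))
  refine ⟨B, m, hm, fun x hx => ?_⟩
  rw [hmem x, hmem (x + m)]
  exact hper x hx
end

section
/- Let L be the first-order language with a single binary function symbol, regard ℕ as an L-structure interpreting the symbol as addition, and let R ⊆ ℕ × ℕ be definable with parameters in this structure. Then R is a finite union of rectangles if and only if there exist B ∈ ℕ and m > 0 such that for all x₁, x₂ ≥ B with x₁ ≡ x₂ (mod m) and all y ∈ ℕ, we have (x₁, y) ∈ R ↔ (x₂, y) ∈ R. -/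
open FirstOrder FirstOrder.Language


namespace PresNF

/-- A linear expression with natural coefficients. -/
structure Lin (n : ℕ) where
  coeff : Fin n → ℕ
  const : ℕ

namespace Lin

def eval {n : ℕ} (l : Lin n) (v : Fin n → ℕ) : ℕ :=
  (∑ i, l.coeff i * v i) + l.const

def add {n : ℕ} (a b : Lin n) : Lin n := ⟨fun i => a.coeff i + b.coeff i, a.const + b.const⟩

def smul {n : ℕ} (k : ℕ) (a : Lin n) : Lin n := ⟨fun i => k * a.coeff i, k * a.const⟩

def addC {n : ℕ} (a : Lin n) (c : ℕ) : Lin n := ⟨a.coeff, a.const + c⟩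

@[simp] theorem eval_add {n : ℕ} (a b : Lin n) (v : Fin n → ℕ) :
    (a.add b).eval v = a.eval v + b.eval v := by
  simp [eval, add, Finset.sum_add_distrib, add_mul]; ring

@[simp] theorem eval_smul {n : ℕ} (k : ℕ) (a : Lin n) (v : Fin n → ℕ) :
    (a.smul k).eval v = k * a.eval v := by
  simp [eval, smul, Finset.mul_sum, mul_add, mul_assoc]

@[simp] theorem eval_addC {n : ℕ} (a : Lin n) (c : ℕ) (v : Fin n → ℕ) :
    (a.addC c).eval v = a.eval v + c := by
  simp [eval, addC]; ring

end Lin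

/-- Atomic Presburger constraints: `a ≤ b` or `a ≡ b [MOD k+1]`. -/
inductive Constr (n : ℕ) where
  | le : Lin n → Lin n → Constr n
  | mod : ℕ → Lin n → Lin n → Constr n

namespace Constr

def Holds {n : ℕ} : Constr n → (Fin n → ℕ) → Prop
  | le a b, v => a.eval v ≤ b.eval v
  | mod k a b, v => a.eval v ≡ b.eval v [MOD (k+1)]

@[simp] theorem holds_le {n : ℕ} (a b : Lin n) (v : Fin n → ℕ) :
    (le a b).Holds v ↔ a.eval v ≤ b.eval v := Iff.rfl

@[simp] theorem holds_mod {n : ℕ} (k : ℕ) (a b : Lin n) (v : Fin n → ℕ) :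
    (mod k a b).Holds v ↔ a.eval v ≡ b.eval v [MOD (k+1)] := Iff.rfl

end Constr

/-- A cell: conjunction of constraints. -/
def CellHolds {n : ℕ} (c : List (Constr n)) (v : Fin n → ℕ) : Prop :=
  ∀ C ∈ c, C.Holds v

/-- Semilinear-normal-form sets: finite unions of cells. -/
def Sem {n : ℕ} (D : Set (Fin n → ℕ)) : Prop :=
  ∃ cs : List (List (Constr n)), D = {v | ∃ c ∈ cs, CellHolds c v}

theorem sem_empty {n : ℕ} : Sem (∅ : Set (Fin n → ℕ)) :=
  ⟨[], by ext v; simp⟩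

theorem sem_univ {n : ℕ} : Sem (Set.univ : Set (Fin n → ℕ)) :=
  ⟨[ [] ], by ext v; simp [CellHolds]⟩

theorem Sem.union {n : ℕ} {D E : Set (Fin n → ℕ)} (hD : Sem D) (hE : Sem E) :
    Sem (D ∪ E) := by
  obtain ⟨cs, rfl⟩ := hD; obtain ⟨ds, rfl⟩ := hE
  refine ⟨cs ++ ds, ?_⟩
  ext v
  simp only [Set.mem_union, Set.mem_setOf_eq, List.mem_append]
  constructor
  · rintro (⟨c, hc, h⟩ | ⟨c, hc, h⟩)
    exacts [⟨c, Or.inl hc, h⟩, ⟨c, Or.inr hc, h⟩]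
  · rintro ⟨c, hc | hc, h⟩
    exacts [Or.inl ⟨c, hc, h⟩, Or.inr ⟨c, hc, h⟩]

theorem Sem.inter {n : ℕ} {D E : Set (Fin n → ℕ)} (hD : Sem D) (hE : Sem E) :
    Sem (D ∩ E) := by
  obtain ⟨cs, rfl⟩ := hD; obtain ⟨ds, rfl⟩ := hE
  refine ⟨cs.flatMap fun c => ds.map fun d => c ++ d, ?_⟩
  ext v
  simp only [Set.mem_inter_iff, Set.mem_setOf_eq, List.mem_flatMap, List.mem_map]
  constructor
  · rintro ⟨⟨c, hc, hcv⟩, ⟨d, hd, hdv⟩⟩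
    exact ⟨c ++ d, ⟨c, hc, d, hd, rfl⟩, fun C hC => (List.mem_append.1 hC).elim (hcv C) (hdv C)⟩
  · rintro ⟨e, ⟨c, hc, d, hd, rfl⟩, hev⟩
    exact ⟨⟨c, hc, fun C hC => hev C (List.mem_append_left _ hC)⟩,
           ⟨d, hd, fun C hC => hev C (List.mem_append_right _ hC)⟩⟩

/-- Negation of `a ≡ b [MOD m]` (m = k+1): `∃ 1 ≤ r ≤ k, a ≡ b + r [MOD m]`. -/
theorem not_modEq_iff {k a b : ℕ} :
    ¬ (a ≡ b [MOD (k+1)]) ↔ ∃ r < k, a ≡ b + (r+1) [MOD (k+1)] := by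
  set m := k + 1 with hm
  constructor
  · intro hne
    have ha := (Nat.div_add_mod a m).symm
    have hb := (Nat.div_add_mod b m).symm
    set qa := a / m; set ra := a % m
    set qb := b / m; set rb := b % m
    have hra : ra < m := Nat.mod_lt _ (by omega)
    have hrb : rb < m := Nat.mod_lt _ (by omega)
    have hne' : ra ≠ rb := hne
    rcases Nat.lt_or_ge rb ra with h | h
    · refine ⟨ra - rb - 1, by omega, ?_⟩
      have h1 : b + (ra - rb - 1 + 1) = ra + m * qb := by omega
      have h2 : a = ra + m * qa := by omega
      show a % m = _ % m
      rw [h1, h2, Nat.add_mul_mod_self_left, Nat.add_mul_mod_self_left]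
    · have h' : rb > ra := by omega
      refine ⟨m + ra - rb - 1, by omega, ?_⟩
      have h1 : b + (m + ra - rb - 1 + 1) = ra + m * qb + m := by omega
      have h2 : a = ra + m * qa := by omega
      show a % m = _ % m
      rw [h1, h2, Nat.add_mod_right, Nat.add_mul_mod_self_left, Nat.add_mul_mod_self_left]
  · rintro ⟨r, hr, hmod⟩ hab
    have hbb : b ≡ b + (r+1) [MOD m] := hab.symm.trans hmod
    have hdvd : m ∣ (b + (r+1)) - b := (Nat.modEq_iff_dvd' (by omega)).1 hbb
    have : m ∣ r + 1 := by simpa using hdvd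
    have := Nat.le_of_dvd (by omega) this
    omega

/-- The negation of a single constraint is Sem. -/
theorem sem_not_constr {n : ℕ} (C : Constr n) : Sem {v | ¬ C.Holds v} := by
  cases C with
  | le a b =>
    refine ⟨[ [Constr.le (b.addC 1) a] ], ?_⟩
    ext v
    simp [CellHolds, Constr.Holds]
  | mod k a b =>
    refine ⟨(List.range k).map fun r => [Constr.mod k a (b.addC (r+1))], ?_⟩
    ext v
    simp only [Set.mem_setOf_eq, Constr.holds_mod, List.mem_map, List.mem_range, not_modEq_iff]
    constructor
    · rintro ⟨r, hr, hmod⟩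
      refine ⟨[Constr.mod k a (b.addC (r+1))], ⟨r, hr, rfl⟩, ?_⟩
      intro C hC
      simp only [List.mem_singleton] at hC
      subst hC
      simpa using hmod
    · rintro ⟨c, ⟨r, hr, rfl⟩, hc⟩
      have := hc _ (List.mem_singleton_self _)
      refine ⟨r, hr, by simpa using this⟩

/-- Complement of a single cell is Sem. -/
theorem sem_not_cell {n : ℕ} (c : List (Constr n)) : Sem {v | ¬ CellHolds c v} := by
  induction c with
  | nil => refine ⟨[], by ext v; simp [CellHolds]⟩
  | cons C c ih =>
    have : {v : Fin n → ℕ | ¬ CellHolds (C :: c) v}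
        = {v | ¬ C.Holds v} ∪ {v | ¬ CellHolds c v} := by
      ext v; simp [CellHolds]; tauto
    rw [this]
    exact (sem_not_constr C).union ih

theorem Sem.compl {n : ℕ} {D : Set (Fin n → ℕ)} (hD : Sem D) : Sem Dᶜ := by
  obtain ⟨cs, rfl⟩ := hD
  induction cs with
  | nil => simpa using sem_univ
  | cons c cs ih =>
    have heq : {v : Fin n → ℕ | ∃ d ∈ c :: cs, CellHolds d v}
        = {v | CellHolds c v} ∪ {v | ∃ d ∈ cs, CellHolds d v} := by
      ext v
      simp only [Set.mem_setOf_eq, Set.mem_union, List.mem_cons]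
      constructor
      · rintro ⟨d, (rfl | hd), h⟩
        exacts [Or.inl h, Or.inr ⟨d, hd, h⟩]
      · rintro (h | ⟨d, hd, h⟩)
        exacts [⟨c, Or.inl rfl, h⟩, ⟨d, Or.inr hd, h⟩]
    rw [heq, Set.compl_union]
    have : {v : Fin n → ℕ | CellHolds c v}ᶜ = {v | ¬ CellHolds c v} := by ext v; simp
    rw [this]
    exact (sem_not_cell c).inter ih

end PresNF
namespace PresNF

variable {n : ℕ}

namespace Lin

def top (l : Lin (n+1)) : ℕ := l.coeff (Fin.last n)

def low (l : Lin (n+1)) : Lin n := ⟨fun i => l.coeff i.castSucc, l.const⟩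

theorem eval_snoc (l : Lin (n+1)) (v : Fin n → ℕ) (x : ℕ) :
    l.eval (Fin.snoc v x) = l.low.eval v + l.top * x := by
  simp [eval, low, top, Fin.sum_univ_castSucc]
  ring

def substC (l : Lin (n+1)) (d : ℕ) : Lin n :=
  ⟨fun i => l.coeff i.castSucc, l.const + l.coeff (Fin.last n) * d⟩

theorem eval_substC (l : Lin (n+1)) (d : ℕ) (v : Fin n → ℕ) :
    (l.substC d).eval v = l.eval (Fin.snoc v d) := by
  rw [eval_snoc]
  simp [eval, substC, low, top]
  ring

end Lin

namespace Constr

def substC : Constr (n+1) → ℕ → Constr n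
  | le a b, d => le (a.substC d) (b.substC d)
  | mod k a b, d => mod k (a.substC d) (b.substC d)

theorem holds_substC (C : Constr (n+1)) (d : ℕ) (v : Fin n → ℕ) :
    (C.substC d).Holds v ↔ C.Holds (Fin.snoc v d) := by
  cases C <;> simp [substC, Holds, Lin.eval_substC]

/-- Substituting the pinned value `γ*x = aI + e - bI` into a constraint,
after scaling by `γ`. -/
def pin (aI bI : Lin n) (γ e : ℕ) : Constr (n+1) → Constr n
  | le a b => le ((((a.low.smul γ).add (aI.smul a.top)).add (bI.smul b.top)).addC (a.top * e))
               ((((b.low.smul γ).add (aI.smul b.top)).add (bI.smul a.top)).addC (b.top * e))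
  | mod k a b => mod (γ * (k+1) - 1)
               ((((a.low.smul γ).add (aI.smul a.top)).add (bI.smul b.top)).addC (a.top * e))
               ((((b.low.smul γ).add (aI.smul b.top)).add (bI.smul a.top)).addC (b.top * e))

theorem pin_eval (a : Lin (n+1)) (α' : ℕ) (aI bI : Lin n) (γ e x : ℕ)
    (heq : γ * x + bI.eval v = aI.eval v + e) :
    ((((a.low.smul γ).add (aI.smul a.top)).add (bI.smul α')).addC (a.top * e)).eval v
      = γ * a.eval (Fin.snoc v x) + (a.top + α') * bI.eval v := by
  rw [Lin.eval_addC, Lin.eval_add, Lin.eval_add, Lin.eval_smul, Lin.eval_smul, Lin.eval_smul,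
    Lin.eval_snoc]
  have heqz : (γ:ℤ) * x + bI.eval v = aI.eval v + e := by exact_mod_cast heq
  zify
  linear_combination (-(a.top : ℤ)) * heqz

theorem holds_pin (aI bI : Lin n) {γ : ℕ} (hγ : 0 < γ) (e x : ℕ) (v : Fin n → ℕ)
    (heq : γ * x + bI.eval v = aI.eval v + e) (C : Constr (n+1)) :
    (C.pin aI bI γ e).Holds v ↔ C.Holds (Fin.snoc v x) := by
  cases C with
  | le a b =>
    simp only [pin, holds_le]
    rw [pin_eval a b.top aI bI γ e x heq, pin_eval b a.top aI bI γ e x heq]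
    rw [add_comm b.top a.top]
    constructor
    · intro h
      have := Nat.le_of_add_le_add_right h
      exact Nat.le_of_mul_le_mul_left this hγ
    · intro h
      exact Nat.add_le_add_right (Nat.mul_le_mul_left γ h) _
  | mod k a b =>
    simp only [pin, holds_mod]
    rw [pin_eval a b.top aI bI γ e x heq, pin_eval b a.top aI bI γ e x heq]
    rw [add_comm b.top a.top]
    have hmod : γ * (k+1) - 1 + 1 = γ * (k+1) := by
      have : 0 < γ * (k+1) := Nat.mul_pos hγ (Nat.succ_pos k)
      omega
    rw [hmod]
    set A := a.eval (Fin.snoc v x)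
    set B := b.eval (Fin.snoc v x)
    set c := (a.top + b.top) * bI.eval v
    constructor
    · intro h
      have h' : γ * A ≡ γ * B [MOD γ * (k+1)] := Nat.ModEq.add_right_cancel' c h
      have : γ * (A % (k+1)) = γ * (B % (k+1)) := by
        have e1 := Nat.mul_mod_mul_left γ A (k+1)
        have e2 := Nat.mul_mod_mul_left γ B (k+1)
        unfold Nat.ModEq at h'
        rw [e1, e2] at h'
        exact h'
      exact Nat.eq_of_mul_eq_mul_left hγ this
    · intro h
      have h' : γ * A ≡ γ * B [MOD γ * (k+1)] := by
        unfold Nat.ModEq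
        rw [Nat.mul_mod_mul_left, Nat.mul_mod_mul_left, h]
      exact h'.add_right c

/-- Is this a "lower-bound" constraint on the last variable? -/
def IsLower : Constr (n+1) → Prop
  | le a b => a.top < b.top
  | mod _ _ _ => False

instance : ∀ C : Constr (n+1), Decidable (IsLower C)
  | .le a b => by unfold IsLower; infer_instance
  | .mod _ _ _ => by unfold IsLower; infer_instance

/-- Modulus factor needed for the decrement step. -/
def mfac : Constr (n+1) → ℕ
  | le a b => if a.top < b.top then b.top - a.top else 1
  | mod k _ _ => k + 1

theorem mfac_pos (C : Constr (n+1)) : 0 < mfac C := by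
  cases C with
  | le a b => simp only [mfac]; split <;> omega
  | mod k _ _ => simp [mfac]

end Constr

/-- The big modulus of a cell. -/
def Mof (c : List (Constr (n+1))) : ℕ := c.foldr (fun C acc => C.mfac * acc) 1

theorem Mof_pos (c : List (Constr (n+1))) : 0 < Mof c := by
  induction c with
  | nil => simp [Mof]
  | cons C c ih => exact Nat.mul_pos C.mfac_pos ih

theorem mfac_dvd_Mof {c : List (Constr (n+1))} {C : Constr (n+1)} (h : C ∈ c) :
    C.mfac ∣ Mof c := by
  induction c with
  | nil => simp at h
  | cons D c ih =>
    rcases List.mem_cons.1 h with rfl | h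
    · exact Dvd.intro _ rfl
    · exact dvd_mul_of_dvd_right (ih h) _

/-- Cancelling the common part of the last variable in a `le` constraint. -/
theorem le_cancel {aL bL α β γ x : ℕ} (hβ : β = α + γ) :
    (aL + α * x ≤ bL + β * x) ↔ aL ≤ bL + γ * x := by
  subst hβ; rw [add_mul]; omega

/-- Decrement step: if all constraints hold at `x`, `M ≤ x`, all moduli divide `M`,
and all lower constraints still hold at `x - M`, then all constraints hold at `x - M`. -/
theorem dec_step {c : List (Constr (n+1))} {v : Fin n → ℕ} {x M : ℕ}
    (hM : 0 < M) (hMx : M ≤ x) (hdvd : ∀ C ∈ c, C.mfac ∣ M)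
    (h : CellHolds c (Fin.snoc v x))
    (hlow : ∀ C ∈ c, C.IsLower → C.Holds (Fin.snoc v (x - M))) :
    CellHolds c (Fin.snoc v (x - M)) := by
  intro C hC
  by_cases hl : C.IsLower
  · exact hlow C hC hl
  cases C with
  | le a b =>
    have hβα : b.top ≤ a.top := by
      simp only [Constr.IsLower] at hl; omega
    have hx := h _ hC
    simp only [Constr.holds_le, Lin.eval_snoc] at hx ⊢
    set y := x - M with hy
    have hxy : x = y + M := by omega
    rw [hxy, Nat.mul_add, Nat.mul_add] at hx
    have hm : b.top * M ≤ a.top * M := Nat.mul_le_mul_right M hβα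
    omega
  | mod k a b =>
    have hx := h _ hC
    have hdk : (k+1) ∣ M := by simpa [Constr.mfac] using hdvd _ hC
    simp only [Constr.holds_mod, Lin.eval_snoc] at hx ⊢
    set y := x - M with hy
    have hxy : x = y + M := by omega
    rw [hxy, Nat.mul_add, Nat.mul_add] at hx
    have h1 : a.low.eval v + a.top * y ≡ a.low.eval v + a.top * y + a.top * M [MOD (k+1)] :=
      (Nat.modEq_iff_dvd' (Nat.le_add_right _ _)).2
        (by simpa using Dvd.dvd.mul_left hdk a.top)
    have h2 : b.low.eval v + b.top * y + b.top * M ≡ b.low.eval v + b.top * y [MOD (k+1)] :=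
      ((Nat.modEq_iff_dvd' (Nat.le_add_right _ _)).2
        (by simpa using Dvd.dvd.mul_left hdk b.top)).symm
    calc a.low.eval v + a.top * y ≡ a.low.eval v + a.top * y + a.top * M [MOD (k+1)] := h1
      _ = a.low.eval v + (a.top * y + a.top * M) := by ring
      _ ≡ b.low.eval v + (b.top * y + b.top * M) [MOD (k+1)] := by
          have : a.low.eval v + a.top * (y + M) ≡ b.low.eval v + b.top * (y+M) [MOD (k+1)] := by
            rw [Nat.mul_add, Nat.mul_add]; exact hx
          simpa [Nat.mul_add, add_assoc] using this
      _ = b.low.eval v + b.top * y + b.top * M := by ring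
      _ ≡ b.low.eval v + b.top * y [MOD (k+1)] := h2

/-- The pinned cell for lower constraint data `(aI, bI, γ)` and offset `e`. -/
def pinCell (c : List (Constr (n+1))) (aI bI : Lin n) (γ e : ℕ) : List (Constr n) :=
  Constr.le bI (aI.addC e) :: Constr.mod (γ - 1) (aI.addC e) bI :: c.map (Constr.pin aI bI γ e)

theorem pinCell_holds_iff {c : List (Constr (n+1))} {aI bI : Lin n} {γ e : ℕ} (hγ : 0 < γ)
    {v : Fin n → ℕ} :
    CellHolds (pinCell c aI bI γ e) v ↔
      ∃ x, γ * x + bI.eval v = aI.eval v + e ∧ CellHolds c (Fin.snoc v x) := by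
  have hγ1 : γ - 1 + 1 = γ := by omega
  constructor
  · intro h
    have h1 : bI.eval v ≤ aI.eval v + e := by
      have := h _ List.mem_cons_self
      simpa using this
    have h2 : (aI.eval v + e) ≡ bI.eval v [MOD γ] := by
      have := h _ (List.mem_cons_of_mem _ List.mem_cons_self)
      simpa [hγ1] using this
    have hdvd : γ ∣ (aI.eval v + e) - bI.eval v := (Nat.modEq_iff_dvd' h1).1 h2.symm
    obtain ⟨x, hx⟩ := hdvd
    have heq : γ * x + bI.eval v = aI.eval v + e := by omega
    refine ⟨x, heq, fun C hC => ?_⟩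
    have := h _ (List.mem_cons_of_mem _ (List.mem_cons_of_mem _ (List.mem_map_of_mem hC)))
    exact (Constr.holds_pin aI bI hγ e x v heq C).1 this
  · rintro ⟨x, heq, hc⟩
    intro C hC
    rcases List.mem_cons.1 hC with rfl | hC
    · simp only [Constr.holds_le, Lin.eval_addC]; omega
    rcases List.mem_cons.1 hC with rfl | hC
    · simp only [Constr.holds_mod, Lin.eval_addC, hγ1]
      show (aI.eval v + e) % γ = bI.eval v % γ
      rw [← heq, Nat.mul_add_mod]
    obtain ⟨D, hD, rfl⟩ := List.mem_map.1 hC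
    exact (Constr.holds_pin aI bI hγ e x v heq D).2 (hc D hD)

end PresNF
namespace PresNF

variable {n : ℕ}

/-- All cells whose union is the projection of cell `c` along the last variable. -/
def projCell (c : List (Constr (n+1))) : List (List (Constr n)) :=
  ((List.range (Mof c)).map fun d => c.map (·.substC d)) ++
    c.flatMap fun C =>
      match C with
      | .le a b =>
          if a.top < b.top then
            (List.range ((b.top - a.top) * Mof c)).map fun e =>
              pinCell c a.low b.low (b.top - a.top) e
          else []
      | .mod _ _ _ => []

theorem cellHolds_map_substC {c : List (Constr (n+1))} {d : ℕ} {v : Fin n → ℕ} :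
    CellHolds (c.map (·.substC d)) v ↔ CellHolds c (Fin.snoc v d) := by
  constructor
  · intro h C hC
    exact (Constr.holds_substC C d v).1 (h _ (List.mem_map_of_mem hC))
  · intro h C hC
    obtain ⟨D, hD, rfl⟩ := List.mem_map.1 hC
    exact (Constr.holds_substC D d v).2 (h D hD)

theorem projCell_correct (c : List (Constr (n+1))) (v : Fin n → ℕ) :
    (∃ x, CellHolds c (Fin.snoc v x)) ↔ ∃ c' ∈ projCell c, CellHolds c' v := by
  constructor
  · rintro ⟨x, hx⟩
    induction x using Nat.strong_induction_on with
    | _ x ih =>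
    by_cases hxM : x < Mof c
    · refine ⟨c.map (·.substC x), ?_, cellHolds_map_substC.2 hx⟩
      exact List.mem_append_left _ (List.mem_map.2 ⟨x, List.mem_range.2 hxM, rfl⟩)
    · push_neg at hxM
      by_cases hlow : ∀ C ∈ c, C.IsLower → C.Holds (Fin.snoc v (x - Mof c))
      · have hdec := dec_step (Mof_pos c) hxM (fun C hC => mfac_dvd_Mof hC) hx hlow
        exact ih (x - Mof c) (by have := Mof_pos c; omega) hdec
      · push_neg at hlow
        obtain ⟨C, hC, hl, hfail⟩ := hlow
        cases C with
        | mod k a b => exact absurd hl (by simp [Constr.IsLower])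
        | le a b =>
          have hαβ : a.top < b.top := hl
          set γ := b.top - a.top with hγdef
          have hγ : 0 < γ := by omega
          have hβ : b.top = a.top + γ := by omega
          -- the constraint holds at x
          have hx' : a.low.eval v ≤ b.low.eval v + γ * x := by
            have := hx _ hC
            simp only [Constr.holds_le, Lin.eval_snoc] at this
            exact (le_cancel hβ).1 this
          -- and fails at x - M
          have hfail' : b.low.eval v + γ * (x - Mof c) < a.low.eval v := by
            simp only [Constr.holds_le, Lin.eval_snoc] at hfail
            by_contra hcon
            push_neg at hcon
            exact hfail ((le_cancel hβ).2 hcon)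
          set e := γ * x + b.low.eval v - a.low.eval v with hedef
          have heq : γ * x + b.low.eval v = a.low.eval v + e := by omega
          have heM : e < γ * Mof c := by
            have h2 : γ * (x - Mof c) + γ * Mof c = γ * x := by
              rw [← Nat.mul_add]
              congr 1
              omega
            omega
          refine ⟨pinCell c a.low b.low γ e, ?_, ?_⟩
          · refine List.mem_append_right _ (List.mem_flatMap.2 ⟨Constr.le a b, hC, ?_⟩)
            simp only [hαβ, if_true]
            exact List.mem_map.2 ⟨e, List.mem_range.2 heM, rfl⟩
          · exact (pinCell_holds_iff hγ).2 ⟨x, heq, hx⟩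
  · rintro ⟨c', hc', h⟩
    rcases List.mem_append.1 hc' with hm | hm
    · obtain ⟨d, _, rfl⟩ := List.mem_map.1 hm
      exact ⟨d, cellHolds_map_substC.1 h⟩
    · obtain ⟨C, hC, hmem⟩ := List.mem_flatMap.1 hm
      cases C with
      | mod k a b => simp at hmem
      | le a b =>
        by_cases hαβ : a.top < b.top
        · simp only [hαβ, if_true] at hmem
          obtain ⟨e, _, rfl⟩ := List.mem_map.1 hmem
          have hγ : 0 < b.top - a.top := by omega
          obtain ⟨x, _, hx⟩ := (pinCell_holds_iff hγ).1 h
          exact ⟨x, hx⟩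
        · simp [hαβ] at hmem

theorem Sem.proj {D : Set (Fin (n+1) → ℕ)} (hD : Sem D) :
    Sem {v : Fin n → ℕ | ∃ x, Fin.snoc v x ∈ D} := by
  obtain ⟨cs, rfl⟩ := hD
  refine ⟨cs.flatMap projCell, ?_⟩
  ext v
  simp only [Set.mem_setOf_eq, List.mem_flatMap]
  constructor
  · rintro ⟨x, c, hc, h⟩
    obtain ⟨c', hc', h'⟩ := (projCell_correct c v).1 ⟨x, h⟩
    exact ⟨c', ⟨c, hc, hc'⟩, h'⟩
  · rintro ⟨c', ⟨c, hc, hc'⟩, h'⟩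
    obtain ⟨x, hx⟩ := (projCell_correct c v).2 ⟨c', hc', h'⟩
    exact ⟨x, c, hc, hx⟩

theorem Sem.substLast {D : Set (Fin (n+1) → ℕ)} (hD : Sem D) (d : ℕ) :
    Sem {v : Fin n → ℕ | Fin.snoc v d ∈ D} := by
  obtain ⟨cs, rfl⟩ := hD
  refine ⟨cs.map fun c => c.map (·.substC d), ?_⟩
  ext v
  simp only [Set.mem_setOf_eq, List.mem_map]
  constructor
  · rintro ⟨c, hc, h⟩
    exact ⟨c.map (·.substC d), ⟨c, hc, rfl⟩, cellHolds_map_substC.2 h⟩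
  · rintro ⟨c', ⟨c, hc, rfl⟩, h⟩
    exact ⟨c, hc, cellHolds_map_substC.1 h⟩

end PresNF
namespace PresNF

theorem iterate_periodic {P : ℕ → Prop} {B m : ℕ}
    (h : ∀ x, B ≤ x → (P x ↔ P (x + m))) :
    ∀ t x, B ≤ x → (P x ↔ P (x + m * t)) := by
  intro t
  induction t with
  | zero => simp
  | succ t ih =>
    intro x hx
    rw [ih x hx, Nat.mul_succ, ← add_assoc]
    exact h (x + m * t) (by omega)

theorem eval_one (l : Lin 1) (x : ℕ) :
    l.eval (fun _ => x) = l.coeff 0 * x + l.const := by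
  simp [Lin.eval]

theorem constr_one_periodic (C : Constr 1) :
    ∃ B m, 0 < m ∧ ∀ x, B ≤ x → (C.Holds (fun _ => x) ↔ C.Holds (fun _ => x + m)) := by
  cases C with
  | le a b =>
    rcases lt_trichotomy (a.coeff 0) (b.coeff 0) with h | h | h
    · refine ⟨a.const, 1, Nat.one_pos, fun x hx => ?_⟩
      have key : ∀ y, a.const ≤ y → (Constr.le a b).Holds (fun _ => y) := by
        intro y hy
        simp only [Constr.holds_le, eval_one]
        have : (a.coeff 0 + 1) * y ≤ b.coeff 0 * y := Nat.mul_le_mul_right y (by omega)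
        rw [add_mul] at this
        omega
      simp [key x hx, key (x+1) (by omega)]
    · refine ⟨0, 1, Nat.one_pos, fun x _ => ?_⟩
      simp only [Constr.holds_le, eval_one, h]
      omega
    · refine ⟨b.const + 1, 1, Nat.one_pos, fun x hx => ?_⟩
      have key : ∀ y, b.const + 1 ≤ y → ¬ (Constr.le a b).Holds (fun _ => y) := by
        intro y hy
        simp only [Constr.holds_le, eval_one]
        have : (b.coeff 0 + 1) * y ≤ a.coeff 0 * y := Nat.mul_le_mul_right y (by omega)
        rw [add_mul] at this
        omega
      simp [key x hx, key (x+1) (by omega)]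
  | mod k a b =>
    refine ⟨0, k + 1, Nat.succ_pos k, fun x _ => ?_⟩
    simp only [Constr.holds_mod, eval_one]
    have ha : a.coeff 0 * (x + (k+1)) + a.const ≡ a.coeff 0 * x + a.const [MOD (k+1)] := by
      show _ % _ = _ % _
      rw [(by ring : a.coeff 0 * (x + (k+1)) + a.const
            = a.coeff 0 * x + a.const + a.coeff 0 * (k+1)), Nat.add_mul_mod_self_right]
    have hb : b.coeff 0 * (x + (k+1)) + b.const ≡ b.coeff 0 * x + b.const [MOD (k+1)] := by
      show _ % _ = _ % _
      rw [(by ring : b.coeff 0 * (x + (k+1)) + b.const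
            = b.coeff 0 * x + b.const + b.coeff 0 * (k+1)), Nat.add_mul_mod_self_right]
    constructor
    · intro h; exact ha.trans (h.trans hb.symm)
    · intro h; exact ha.symm.trans (h.trans hb)

theorem list_one_periodic (l : List (Constr 1)) :
    ∃ B m, 0 < m ∧ ∀ C ∈ l, ∀ x, B ≤ x →
      (C.Holds (fun _ => x) ↔ C.Holds (fun _ => x + m)) := by
  induction l with
  | nil => exact ⟨0, 1, Nat.one_pos, by simp⟩
  | cons C l ih =>
    obtain ⟨B₁, m₁, hm₁, h₁⟩ := constr_one_periodic C
    obtain ⟨B₂, m₂, hm₂, h₂⟩ := ih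
    refine ⟨max B₁ B₂, m₁ * m₂, Nat.mul_pos hm₁ hm₂, ?_⟩
    intro D hD x hx
    rcases List.mem_cons.1 hD with rfl | hD
    · exact iterate_periodic h₁ m₂ x (le_of_max_le_left hx)
    · rw [mul_comm]
      exact iterate_periodic (fun y hy => h₂ D hD y hy) m₁ x (le_of_max_le_right hx)

theorem sem_one_periodic {D : Set (Fin 1 → ℕ)} (hD : Sem D) :
    ∃ B m, 0 < m ∧ ∀ x₁ x₂ : ℕ, B ≤ x₁ → B ≤ x₂ → x₁ ≡ x₂ [MOD m] →
      ((fun _ => x₁) ∈ D ↔ (fun _ => x₂) ∈ D) := by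
  obtain ⟨cs, rfl⟩ := hD
  obtain ⟨B, m, hm, h⟩ := list_one_periodic cs.flatten
  have step : ∀ x, B ≤ x →
      ((fun _ => x) ∈ {v | ∃ c ∈ cs, CellHolds c v} ↔
        (fun _ => x + m) ∈ {v | ∃ c ∈ cs, CellHolds c v}) := by
    intro x hx
    simp only [Set.mem_setOf_eq]
    constructor
    · rintro ⟨c, hc, hcv⟩
      exact ⟨c, hc, fun C hC => (h C (List.mem_flatten.2 ⟨c, hc, hC⟩) x hx).1 (hcv C hC)⟩
    · rintro ⟨c, hc, hcv⟩
      exact ⟨c, hc, fun C hC => (h C (List.mem_flatten.2 ⟨c, hc, hC⟩) x hx).2 (hcv C hC)⟩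
  refine ⟨B, m, hm, ?_⟩
  have main : ∀ x₁ x₂ : ℕ, B ≤ x₁ → B ≤ x₂ → x₁ ≤ x₂ → x₁ ≡ x₂ [MOD m] →
      ((fun _ => x₁) ∈ {v | ∃ c ∈ cs, CellHolds c v} ↔
        (fun _ => x₂) ∈ {v | ∃ c ∈ cs, CellHolds c v}) := by
    intro x₁ x₂ h₁ h₂ hle hmod
    obtain ⟨t, ht⟩ := (Nat.modEq_iff_dvd' hle).1 hmod
    have hx₂ : x₂ = x₁ + m * t := by omega
    rw [hx₂]
    exact iterate_periodic step t x₁ h₁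
  intro x₁ x₂ h₁ h₂ hmod
  rcases le_total x₁ x₂ with hle | hle
  · exact main x₁ x₂ h₁ h₂ hle hmod
  · exact (main x₂ x₁ h₂ h₁ hle hmod.symm).symm

end PresNF
namespace PresNF

abbrev U : Set ℕ := Set.univ

def Lin.var {m : ℕ} (i : Fin m) : Lin m := ⟨fun j => if j = i then 1 else 0, 0⟩

theorem Lin.eval_var {m : ℕ} (i : Fin m) (v : Fin m → ℕ) : (Lin.var i).eval v = v i := by
  simp [Lin.eval, Lin.var, ite_mul]

theorem term_lin {m : ℕ} (t : (addLang[[U]]).Term (Fin m)) :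
    ∃ l : Lin m, ∀ v : Fin m → ℕ, t.realize v = l.eval v := by
  induction t with
  | var i => exact ⟨Lin.var i, fun v => (Lin.eval_var i v).symm⟩
  | @func k f ts ih =>
    cases f with
    | inl f =>
      have hk : k = 2 := f.down
      subst hk
      obtain ⟨l₀, h₀⟩ := ih ⟨0, by omega⟩
      obtain ⟨l₁, h₁⟩ := ih ⟨1, by omega⟩
      refine ⟨l₀.add l₁, fun v => ?_⟩
      have : Term.realize v (Term.func (Sum.inl f) ts)
          = (ts ⟨0, by omega⟩).realize v + (ts ⟨1, by omega⟩).realize v := rfl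
      rw [this, h₀, h₁, Lin.eval_add]
    | inr c =>
      cases k with
      | zero =>
        refine ⟨⟨fun _ => 0, (c : ℕ)⟩, fun v => ?_⟩
        have : Term.realize v (Term.func (Sum.inr c) ts) = (c : ℕ) := rfl
        rw [this]
        simp [Lin.eval]
      | succ k => exact c.elim

theorem bf_sem {k : ℕ} (φ : (addLang[[U]]).BoundedFormula (Fin 2) k) :
    Sem {w : Fin (2+k) → ℕ |
      φ.Realize (fun i => w (Fin.castAdd k i)) (fun j => w (Fin.natAdd 2 j))} := by
  induction φ with
  | falsum =>
    exact ⟨[], by ext w; simp [BoundedFormula.Realize]⟩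
  | @equal k' t₁ t₂ =>
    obtain ⟨l₁, h₁⟩ := term_lin (t₁.relabel finSumFinEquiv)
    obtain ⟨l₂, h₂⟩ := term_lin (t₂.relabel finSumFinEquiv)
    refine ⟨[ [Constr.le l₁ l₂, Constr.le l₂ l₁] ], ?_⟩
    ext w
    have henv : ∀ (t : (addLang[[U]]).Term (Fin 2 ⊕ Fin k')),
        t.realize (Sum.elim (fun i => w (Fin.castAdd k' i)) (fun j => w (Fin.natAdd 2 j)))
          = (t.relabel finSumFinEquiv).realize w := by
      intro t
      rw [Term.realize_relabel]
      congr 1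
      funext s
      cases s <;> rfl
    have hiff : ((BoundedFormula.equal t₁ t₂).Realize (fun i => w (Fin.castAdd k' i))
          (fun j => w (Fin.natAdd 2 j))) ↔ l₁.eval w = l₂.eval w := by
      have hrfl : ((BoundedFormula.equal t₁ t₂).Realize (fun i => w (Fin.castAdd k' i))
            (fun j => w (Fin.natAdd 2 j)))
          ↔ Term.realize (Sum.elim (fun i => w (Fin.castAdd k' i))
              fun j => w (Fin.natAdd 2 j)) t₁
            = Term.realize (Sum.elim (fun i => w (Fin.castAdd k' i))
              fun j => w (Fin.natAdd 2 j)) t₂ := Iff.rfl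
      rw [hrfl, henv, henv, h₁, h₂]
    simp only [Set.mem_setOf_eq, hiff]
    constructor
    · intro h
      refine ⟨_, List.mem_singleton_self _, ?_⟩
      intro C hC
      rcases List.mem_cons.1 hC with rfl | hC
      · simp only [Constr.holds_le]; omega
      · rcases List.mem_cons.1 hC with rfl | hC
        · simp only [Constr.holds_le]; omega
        · simp at hC
    · rintro ⟨c, hc, h⟩
      simp only [List.mem_singleton] at hc
      subst hc
      have u1 := h _ List.mem_cons_self
      have u2 := h _ (List.mem_cons_of_mem _ List.mem_cons_self)
      simp only [Constr.holds_le] at u1 u2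
      omega
  | @rel k' l R ts =>
    rcases R with R | R
    · exact R.elim
    · exact R.elim
  | @imp k' φ ψ ihφ ihψ =>
    have : {w : Fin (2+k') → ℕ | (φ.imp ψ).Realize
          (fun i => w (Fin.castAdd k' i)) (fun j => w (Fin.natAdd 2 j))}
        = {w | φ.Realize (fun i => w (Fin.castAdd k' i)) (fun j => w (Fin.natAdd 2 j))}ᶜ
          ∪ {w | ψ.Realize (fun i => w (Fin.castAdd k' i)) (fun j => w (Fin.natAdd 2 j))} := by
      ext w
      simp only [Set.mem_setOf_eq, Set.mem_union, Set.mem_compl_iff,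
        BoundedFormula.realize_imp]
      tauto
    rw [this]
    exact Sem.union ihφ.compl ihψ
  | @all k' φ ih =>
    have key : ∀ (w : Fin (2+k') → ℕ) (x : ℕ),
        (φ.Realize (fun i => (Fin.snoc w x : Fin ((2+k')+1) → ℕ) (Fin.castAdd (k'+1) i))
          (fun j => (Fin.snoc w x : Fin ((2+k')+1) → ℕ) (Fin.natAdd 2 j))
          ↔ φ.Realize (fun i => w (Fin.castAdd k' i))
              (Fin.snoc (fun j => w (Fin.natAdd 2 j)) x)) := by
      intro w x
      have h1 : (fun i => (Fin.snoc w x : Fin ((2+k')+1) → ℕ) (Fin.castAdd (k'+1) i))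
          = fun i => w (Fin.castAdd k' i) := by
        funext i
        have : Fin.castAdd (k'+1) i = Fin.castSucc (Fin.castAdd k' i) := by
          ext; simp
        rw [this, Fin.snoc_castSucc]
      have h2 : (fun j => (Fin.snoc w x : Fin ((2+k')+1) → ℕ) (Fin.natAdd 2 j))
          = Fin.snoc (fun j => w (Fin.natAdd 2 j)) x := by
        funext j
        refine Fin.lastCases ?_ ?_ j
        · have : Fin.natAdd 2 (Fin.last k') = Fin.last (2+k') := by ext; simp
          rw [this, Fin.snoc_last, Fin.snoc_last]
        · intro j'
          have : Fin.natAdd 2 (Fin.castSucc j') = Fin.castSucc (Fin.natAdd 2 j') := by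
            ext; simp
          rw [this, Fin.snoc_castSucc, Fin.snoc_castSucc]
      rw [h1, h2]
    have hset : {w : Fin (2+k') → ℕ | φ.all.Realize
          (fun i => w (Fin.castAdd k' i)) (fun j => w (Fin.natAdd 2 j))}
        = {w : Fin (2+k') → ℕ | ∃ x, Fin.snoc w x ∈
            {u : Fin (2+(k'+1)) → ℕ | φ.Realize (fun i => u (Fin.castAdd (k'+1) i))
              (fun j => u (Fin.natAdd 2 j))}ᶜ}ᶜ := by
      ext w
      simp only [Set.mem_setOf_eq, Set.mem_compl_iff, BoundedFormula.realize_all,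
        not_exists, not_not]
      constructor
      · intro h x
        exact (key w x).2 (h x)
      · intro h x
        exact (key w x).1 (h x)
    rw [hset]
    exact (Sem.proj ih.compl).compl

end PresNF
namespace PresNF

theorem fiber_periodic {R : Set (ℕ × ℕ)}
    (hsem : Sem {w : Fin 2 → ℕ | (w 0, w 1) ∈ R}) (y : ℕ) :
    ∃ B m, 0 < m ∧ ∀ x₁ x₂ : ℕ, B ≤ x₁ → B ≤ x₂ → x₁ ≡ x₂ [MOD m] →
      ((x₁, y) ∈ R ↔ (x₂, y) ∈ R) := by
  have hsem' : Sem {w : Fin (1+1) → ℕ | (w 0, w 1) ∈ R} := hsem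
  have hsub := Sem.substLast (n := 1) hsem' y
  obtain ⟨B, m, hm, h⟩ := sem_one_periodic hsub
  refine ⟨B, m, hm, fun x₁ x₂ h₁ h₂ hmod => ?_⟩
  have key : ∀ x : ℕ, ((fun _ => x) : Fin 1 → ℕ) ∈
      {v : Fin 1 → ℕ | Fin.snoc v y ∈ {w : Fin (1+1) → ℕ | (w 0, w 1) ∈ R}}
        ↔ (x, y) ∈ R := by
    intro x
    have h0 : (Fin.snoc ((fun _ => x) : Fin 1 → ℕ) y : Fin (1+1) → ℕ) 0 = x := by
      have e : (0 : Fin (1+1)) = Fin.castSucc 0 := rfl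
      rw [e, Fin.snoc_castSucc]
    have h1 : (Fin.snoc ((fun _ => x) : Fin 1 → ℕ) y : Fin (1+1) → ℕ) 1 = y := by
      have e : (1 : Fin (1+1)) = Fin.last 1 := rfl
      rw [e, Fin.snoc_last]
    simp only [Set.mem_setOf_eq]
    rw [h0, h1]
  rw [← key x₁, ← key x₂]
  exact h x₁ x₂ h₁ h₂ hmod

theorem main_forward {R : Set (ℕ × ℕ)}
    (hsem : Sem {w : Fin 2 → ℕ | (w 0, w 1) ∈ R})
    (k : ℕ) (S T : Fin k → Set ℕ) (hRect : R = ⋃ i, S i ×ˢ T i) :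
    ∃ (B m : ℕ), 0 < m ∧
      ∀ x₁ x₂ : ℕ, B ≤ x₁ → B ≤ x₂ → x₁ ≡ x₂ [MOD m] →
        ∀ y : ℕ, ((x₁, y) ∈ R ↔ (x₂, y) ∈ R) := by
  classical
  have hper := fiber_periodic hsem
  choose Bof mof hmpos hperiod using hper
  set J : ℕ → Set (Fin k) := fun x => {i | x ∈ S i} with hJ
  set F : Set (Fin k) → Set ℕ := fun Jx => ⋃ i ∈ Jx, T i with hF
  have hfib : ∀ x y : ℕ, (x, y) ∈ R ↔ y ∈ F (J x) := by
    intro x y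
    rw [hRect]
    simp only [Set.mem_iUnion, Set.mem_prod, hF, hJ, Set.mem_setOf_eq]
    constructor
    · rintro ⟨i, hx, hy⟩; exact ⟨i, hx, hy⟩
    · rintro ⟨i, hx, hy⟩; exact ⟨i, hx, hy⟩
  -- witnesses distinguishing distinct fiber values
  have hwit : ∀ J₁ J₂ : Set (Fin k), ∃ y : ℕ, F J₁ ≠ F J₂ → ¬(y ∈ F J₁ ↔ y ∈ F J₂) := by
    intro J₁ J₂
    by_cases hne : F J₁ = F J₂
    · exact ⟨0, fun h => absurd hne h⟩
    · have : ∃ y, ¬(y ∈ F J₁ ↔ y ∈ F J₂) := by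
        by_contra hcon
        push_neg at hcon
        exact hne (Set.ext fun y => hcon y)
      obtain ⟨y, hy⟩ := this
      exact ⟨y, fun _ => hy⟩
  choose wit hwitspec using hwit
  have : Finite (Set (Fin k) × Set (Fin k)) := inferInstance
  have := Fintype.ofFinite (Set (Fin k) × Set (Fin k))
  refine ⟨Finset.univ.sup (fun p : Set (Fin k) × Set (Fin k) => Bof (wit p.1 p.2)),
    ∏ p : Set (Fin k) × Set (Fin k), mof (wit p.1 p.2),
    Finset.prod_pos (fun p _ => hmpos _), ?_⟩
  intro x₁ x₂ h₁ h₂ hmod y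
  have hFF : F (J x₁) = F (J x₂) := by
    by_contra hne
    apply hwitspec (J x₁) (J x₂) hne
    rw [← hfib x₁ (wit (J x₁) (J x₂)), ← hfib x₂ (wit (J x₁) (J x₂))]
    have hp : ((J x₁, J x₂) : Set (Fin k) × Set (Fin k)) ∈ Finset.univ := Finset.mem_univ _
    refine hperiod _ x₁ x₂ ?_ ?_ ?_
    · exact le_trans (Finset.le_sup (f := fun p : Set (Fin k) × Set (Fin k) => Bof (wit p.1 p.2)) hp) h₁
    · exact le_trans (Finset.le_sup (f := fun p : Set (Fin k) × Set (Fin k) => Bof (wit p.1 p.2)) hp) h₂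
    · exact Nat.ModEq.of_dvd
        (Finset.dvd_prod_of_mem (fun p : Set (Fin k) × Set (Fin k) => mof (wit p.1 p.2)) hp) hmod
  rw [hfib x₁ y, hfib x₂ y, hFF]

theorem main_backward {R : Set (ℕ × ℕ)} (B m : ℕ) (hm : 0 < m)
    (h : ∀ x₁ x₂ : ℕ, B ≤ x₁ → B ≤ x₂ → x₁ ≡ x₂ [MOD m] →
      ∀ y : ℕ, ((x₁, y) ∈ R ↔ (x₂, y) ∈ R)) :
    ∃ (k : ℕ) (S T : Fin k → Set ℕ), R = ⋃ i, S i ×ˢ T i := by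
  classical
  refine ⟨B + m,
    fun i => if (i : ℕ) < B then {(i : ℕ)} else {x | B ≤ x ∧ x % m = (i : ℕ) - B},
    fun i => if (i : ℕ) < B then {y | ((i : ℕ), y) ∈ R}
      else {y | ∃ x, B ≤ x ∧ x % m = (i : ℕ) - B ∧ (x, y) ∈ R}, ?_⟩
  ext ⟨x, y⟩
  simp only [Set.mem_iUnion, Set.mem_prod]
  constructor
  · intro hxy
    by_cases hx : x < B
    · refine ⟨⟨x, by omega⟩, ?_⟩
      simp only [hx, if_pos]
      exact ⟨rfl, hxy⟩
    · push_neg at hx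
      refine ⟨⟨B + x % m, by have := Nat.mod_lt x hm; omega⟩, ?_⟩
      have hnlt : ¬ ((B + x % m : ℕ) < B) := by omega
      simp only [hnlt, if_neg, if_false]
      have hsub : (B + x % m) - B = x % m := by omega
      refine ⟨⟨hx, by rw [hsub]⟩, ⟨x, hx, by rw [hsub], hxy⟩⟩
  · rintro ⟨i, hS, hT⟩
    by_cases hi : (i : ℕ) < B
    · simp only [hi, if_pos] at hS hT
      have : x = (i : ℕ) := hS
      rwa [this]
    · simp only [hi, if_neg, if_false] at hS hT
      obtain ⟨hxB, hxm⟩ := hS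
      obtain ⟨x', hx'B, hx'm, hx'R⟩ := hT
      have hcong : x ≡ x' [MOD m] := by
        unfold Nat.ModEq
        rw [hxm, hx'm]
      exact (h x x' hxB hx'B hcong y).2 hx'R

end PresNF

/-- A binary relation on `ℕ` definable with parameters in `(ℕ, +)` is a finite
union of rectangles iff beyond some bound `B` its fibers agree on first
arguments congruent modulo some `m > 0`. -/
theorem stmt_12 (R : Set (ℕ × ℕ)) (hR : (Set.univ : Set ℕ).Definable₂ addLang R) :
    (∃ (k : ℕ) (S T : Fin k → Set ℕ), R = ⋃ i, S i ×ˢ T i) ↔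
      ∃ (B m : ℕ), 0 < m ∧
        ∀ x₁ x₂ : ℕ, B ≤ x₁ → B ≤ x₂ → x₁ ≡ x₂ [MOD m] →
          ∀ y : ℕ, ((x₁, y) ∈ R ↔ (x₂, y) ∈ R) := by
  obtain ⟨φ, hφ⟩ := hR
  have hsem : PresNF.Sem {w : Fin 2 → ℕ | (w 0, w 1) ∈ R} := by
    have hbf := PresNF.bf_sem (k := 0) φ
    have hseteq : {w : Fin (2+0) → ℕ |
        BoundedFormula.Realize φ (fun i => w (Fin.castAdd 0 i)) (fun j => w (Fin.natAdd 2 j))}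
        = {w : Fin 2 → ℕ | (w 0, w 1) ∈ R} := by
      ext w
      have h1 : (fun i => w (Fin.castAdd 0 i)) = w := rfl
      have hxs : BoundedFormula.Realize φ w (fun j : Fin 0 => w (Fin.natAdd 2 j))
          = FirstOrder.Language.Formula.Realize φ w := by
        unfold FirstOrder.Language.Formula.Realize
        exact congrArg (BoundedFormula.Realize φ w) (Subsingleton.elim _ _)
      simp only [Set.mem_setOf_eq]
      rw [h1, hxs]
      exact (Set.ext_iff.1 hφ w).symm
    rw [hseteq] at hbf
    exact hbf
  constructor
  · rintro ⟨k, S, T, hRect⟩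
    exact PresNF.main_forward hsem k S T hRect
  · rintro ⟨B, m, hm, h⟩
    exact PresNF.main_backward B m hm h
end

section
/- Let m, n ∈ ℕ, let A : Fin m → Fin n → ℤ and c : Fin m → ℤ, and let a ∈ ℕ satisfy |A j i| ≤ a for all j, i and |c j| ≤ a for all j. Let S = { x : Fin n → ℕ | ∀ j, ∑_i A j i · (x i) = c j } be the set of natural-number solutions of this system of m linear equations. If there exists x ∈ S and a coordinate i with x i > ((m + 2)·a + 1)^n, then S is infinite. -/
open Matrix Finset

lemma exists_square_submatrix {m k : ℕ} (M : Matrix (Fin m) (Fin k) ℚ)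
    (h : ∀ u : Fin k → ℚ, M.mulVec u = 0 → u = 0) :
    k ≤ m ∧ ∃ f : Fin k → Fin m, (M.submatrix f id).det ≠ 0 := by
  have hcols : LinearIndependent ℚ M.col := by
    rw [Fintype.linearIndependent_iff]
    intro g hg
    have h2 : M.mulVec g = 0 := by
      funext j
      have := congrFun hg j
      simpa [Matrix.mulVec, dotProduct, Finset.sum_apply, mul_comm, Matrix.col] using this
    exact fun i => congrFun (h g h2) i
  have hrank : M.rank = k := by
    rw [Matrix.rank_eq_finrank_span_cols, finrank_span_eq_card hcols, Fintype.card_fin]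
  have hkm : k ≤ m := by
    have := M.rank_le_card_height
    rw [hrank, Fintype.card_fin] at this
    exact this
  have hspan : Submodule.span ℚ (Set.range M) = ⊤ := by
    apply Submodule.eq_top_of_finrank_eq
    rw [show Set.range M = Set.range M.row from rfl, ← Matrix.rank_eq_finrank_span_row, hrank, Module.finrank_pi, Fintype.card_fin]
  obtain ⟨b, hbsub, hbspan, hbind⟩ := exists_linearIndependent ℚ (Set.range M)
  haveI : Fintype b := (Set.Finite.subset (Set.finite_range M) hbsub).fintype
  have hcard : Fintype.card b = k := by
    have h1 := finrank_span_set_eq_card hbind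
    rw [hbspan, hspan, finrank_top, Module.finrank_pi, Fintype.card_fin] at h1
    rw [← Set.toFinset_card]; omega
  have hchoice : ∀ y : b, ∃ j : Fin m, M j = (y : Fin k → ℚ) := fun y => hbsub y.2
  choose g hg using hchoice
  let e : Fin k ≃ b := (Fintype.equivFinOfCardEq hcard).symm
  refine ⟨hkm, fun i => g (e i), ?_⟩
  intro hdet0
  obtain ⟨v, hv0, hv⟩ := Matrix.exists_vecMul_eq_zero_iff.mpr hdet0
  have hrows : LinearIndependent ℚ (fun i : Fin k => M (g (e i))) := by
    have heq : (fun i : Fin k => M (g (e i))) = (fun y : b => (y : Fin k → ℚ)) ∘ e := by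
      funext i; simp [hg]
    rw [heq]
    exact hbind.comp e e.injective
  apply hv0
  rw [Fintype.linearIndependent_iff] at hrows
  have hsum : ∑ i, v i • M (g (e i)) = 0 := by
    funext j'
    have := congrFun hv j'
    simpa [Matrix.vecMul, dotProduct, Finset.sum_apply, Matrix.submatrix_apply] using this
  funext i
  exact hrows v hsum i

lemma fact_bound (m n a : ℕ) (h : n ≤ m) :
    (n.factorial * a ^ n : ℕ) ≤ ((m + 2) * a + 1) ^ n := by
  calc n.factorial * a ^ n ≤ n ^ n * a ^ n :=
        Nat.mul_le_mul_right _ n.factorial_le_pow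
    _ = (n * a) ^ n := (mul_pow n a n).symm
    _ ≤ ((m + 2) * a + 1) ^ n := by
        apply Nat.pow_le_pow_left
        have : n * a ≤ (m + 2) * a := Nat.mul_le_mul_right a (by omega)
        omega

lemma key_bound (m a : ℕ) :
    ∀ (n : ℕ) (A : Fin m → Fin n → ℤ) (c : Fin m → ℤ),
      (∀ j i, |A j i| ≤ (a : ℤ)) → (∀ j, |c j| ≤ (a : ℤ)) →
      (¬ ∃ u : Fin n → ℚ, (∀ i, 0 ≤ u i) ∧ u ≠ 0 ∧ ∀ j, ∑ i, (A j i : ℚ) * u i = 0) →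
      ∀ x : Fin n → ℚ, (∀ i, 0 ≤ x i) → (∀ j, ∑ i, (A j i : ℚ) * x i = (c j : ℚ)) →
      ∀ i, x i ≤ (((m + 2) * a + 1 : ℕ) : ℚ) ^ n := by
  intro n
  induction n with
  | zero => intro A c hA hc hker x hx hsol i; exact i.elim0
  | succ n ih =>
    intro A c hA hc hker x hx hsol
    set B : ℚ := (((m + 2) * a + 1 : ℕ) : ℚ) with hBdef
    have hB1 : (1 : ℚ) ≤ B := by
      rw [hBdef]; exact_mod_cast Nat.le_add_left 1 ((m + 2) * a)
    have hB0 : (0 : ℚ) ≤ B := le_trans zero_le_one hB1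
    have hBn0 : (0 : ℚ) ≤ B ^ n := pow_nonneg hB0 n
    -- any nonnegative solution with a zero coordinate is bounded by B ^ n
    have hzero : ∀ y : Fin (n + 1) → ℚ, (∀ i, 0 ≤ y i) →
        (∀ j, ∑ i, (A j i : ℚ) * y i = (c j : ℚ)) → (∃ i0, y i0 = 0) →
        ∀ i, y i ≤ B ^ n := by
      rintro y hy hysol ⟨i0, hy0⟩ i
      have hker' : ¬ ∃ u' : Fin n → ℚ, (∀ l, 0 ≤ u' l) ∧ u' ≠ 0 ∧
          ∀ j, ∑ l, ((A j (i0.succAbove l) : ℤ) : ℚ) * u' l = 0 := by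
        rintro ⟨u', hu'0, hu'ne, hu'k⟩
        apply hker
        refine ⟨i0.insertNth (0 : ℚ) u', ?_, ?_, ?_⟩
        · intro i'
          rcases eq_or_ne i' i0 with rfl | hne
          · simp
          · obtain ⟨l, hl⟩ := Fin.exists_succAbove_eq hne
            rw [← hl, Fin.insertNth_apply_succAbove]
            exact hu'0 l
        · obtain ⟨l, hl⟩ := Function.ne_iff.mp hu'ne
          refine Function.ne_iff.mpr ⟨i0.succAbove l, ?_⟩
          rw [Fin.insertNth_apply_succAbove]
          simpa using hl
        · intro j
          rw [Fin.sum_univ_succAbove _ i0]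
          simp only [Fin.insertNth_apply_same, Fin.insertNth_apply_succAbove, mul_zero, zero_add]
          exact hu'k j
      have hsol' : ∀ j, ∑ l, ((A j (i0.succAbove l) : ℤ) : ℚ) * y (i0.succAbove l) = (c j : ℚ) := by
        intro j
        have := hysol j
        rw [Fin.sum_univ_succAbove (fun i' => (A j i' : ℚ) * y i') i0, hy0, mul_zero, zero_add] at this
        exact this
      have hred := ih (fun j l => A j (i0.succAbove l)) c (fun j l => hA j _) hc hker'
        (fun l => y (i0.succAbove l)) (fun l => hy _) hsol'
      rcases eq_or_ne i i0 with rfl | hne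
      · rw [hy0]; exact hBn0
      · obtain ⟨l, hl⟩ := Fin.exists_succAbove_eq hne
        rw [← hl]
        exact hred l
    intro i
    by_cases hKtriv : ∀ u : Fin (n + 1) → ℚ, (∀ j, ∑ i', (A j i' : ℚ) * u i' = 0) → u = 0
    · -- full column rank: Cramer bound
      set M : Matrix (Fin m) (Fin (n + 1)) ℚ := Matrix.of fun j i' => ((A j i' : ℤ) : ℚ) with hMdef
      have hM : ∀ u : Fin (n + 1) → ℚ, M.mulVec u = 0 → u = 0 := by
        intro u hu
        apply hKtriv
        intro j
        have := congrFun hu j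
        simpa [hMdef, Matrix.mulVec, dotProduct] using this
      obtain ⟨hkm, f, hdet⟩ := exists_square_submatrix M hM
      set N : Matrix (Fin (n + 1)) (Fin (n + 1)) ℤ := Matrix.of fun l l' => A (f l) l' with hNdef
      have hNmap : M.submatrix f id = N.map ⇑(Int.castRingHom ℚ) := by
        ext l l'; simp [hMdef, hNdef]
      have hdetcast : (M.submatrix f id).det = ((N.det : ℤ) : ℚ) := by
        have h5 := RingHom.map_det (Int.castRingHom ℚ) N
        rw [RingHom.mapMatrix_apply] at h5
        rw [hNmap, ← h5]; simp
      have hdetN : N.det ≠ 0 := by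
        intro h0
        apply hdet
        rw [hdetcast, h0, Int.cast_zero]
      set U : Matrix (Fin (n + 1)) (Fin (n + 1)) ℤ := N.updateCol i (fun l => c (f l)) with hUdef
      -- Cramer identity
      have hsolveN : (M.submatrix f id).mulVec x = fun l => (c (f l) : ℚ) := by
        funext l
        simpa [hMdef, Matrix.mulVec, dotProduct] using hsol (f l)
      have hcramer : (M.submatrix f id).det • x =
          Matrix.cramer (M.submatrix f id) (fun l => (c (f l) : ℚ)) := by
        rw [Matrix.cramer_eq_adjugate_mulVec, ← hsolveN, Matrix.mulVec_mulVec,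
          Matrix.adjugate_mul, Matrix.smul_mulVec, Matrix.one_mulVec]
      have hxi : ((N.det : ℤ) : ℚ) * x i = ((U.det : ℤ) : ℚ) := by
        have h1 := congrFun hcramer i
        rw [Matrix.cramer_apply] at h1
        have h2 : (M.submatrix f id).updateCol i (fun l => (c (f l) : ℚ)) =
            U.map ⇑(Int.castRingHom ℚ) := by
          ext l l'
          rcases eq_or_ne l' i with rfl | hne
          · simp [hUdef, Matrix.updateCol_apply]
          · simp [hUdef, Matrix.updateCol_apply, hne, hNmap]
        have h5 := RingHom.map_det (Int.castRingHom ℚ) U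
        rw [RingHom.mapMatrix_apply] at h5
        rw [h2, ← h5] at h1
        simp only [Pi.smul_apply, smul_eq_mul, hdetcast] at h1
        simpa using h1
      -- bounds
      have hUbound : |U.det| ≤ ((n + 1).factorial * a ^ (n + 1) : ℕ) := by
        have hent : ∀ l l', (AbsoluteValue.abs : AbsoluteValue ℤ ℤ) (U l l') ≤ (a : ℤ) := by
          intro l l'
          rcases eq_or_ne l' i with rfl | hne
          · simpa [hUdef, Matrix.updateCol_apply] using hc (f l)
          · simpa [hUdef, Matrix.updateCol_apply, hne, hNdef] using hA (f l) l'
        have := Matrix.det_le hent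
        rw [Fintype.card_fin] at this
        calc |U.det| ≤ (n + 1).factorial • (a : ℤ) ^ (n + 1) := this
          _ = (((n + 1).factorial * a ^ (n + 1) : ℕ) : ℤ) := by push_cast [nsmul_eq_mul]; ring
      have hdet1 : (1 : ℚ) ≤ |((N.det : ℤ) : ℚ)| := by
        rw [← Int.cast_abs]
        exact_mod_cast Int.one_le_abs hdetN
      have hxabs : |x i| ≤ |((U.det : ℤ) : ℚ)| := by
        have h3 : |((N.det : ℤ) : ℚ)| * |x i| = |((U.det : ℤ) : ℚ)| := by
          rw [← abs_mul, hxi]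
        calc |x i| = 1 * |x i| := (one_mul _).symm
          _ ≤ |((N.det : ℤ) : ℚ)| * |x i| :=
              mul_le_mul_of_nonneg_right hdet1 (abs_nonneg _)
          _ = |((U.det : ℤ) : ℚ)| := h3
      calc x i ≤ |x i| := le_abs_self _
        _ ≤ |((U.det : ℤ) : ℚ)| := hxabs
        _ = ((|U.det| : ℤ) : ℚ) := by rw [Int.cast_abs]
        _ ≤ (((n + 1).factorial * a ^ (n + 1) : ℕ) : ℚ) := by exact_mod_cast hUbound
        _ ≤ B ^ (n + 1) := by
            rw [hBdef]
            exact_mod_cast fact_bound m (n + 1) a hkm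
    · push_neg at hKtriv
      obtain ⟨u, huk, hune⟩ := hKtriv
      by_cases hzx : ∃ i0, x i0 = 0
      · exact le_trans (hzero x hx hsol hzx i) (pow_le_pow_right₀ hB1 (Nat.le_succ n))
      · push_neg at hzx
        have hposx : ∀ i', 0 < x i' := fun i' => lt_of_le_of_ne (hx i') (Ne.symm (hzx i'))
        have hneg_ex : ∃ i', u i' < 0 := by
          by_contra hcon
          push_neg at hcon
          exact hker ⟨u, hcon, hune, huk⟩
        have hpos_ex : ∃ i', 0 < u i' := by
          by_contra hcon
          push_neg at hcon
          refine hker ⟨-u, fun i' => neg_nonneg.mpr (hcon i'), neg_ne_zero.mpr hune, fun j => ?_⟩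
          have h4 := huk j
          simp only [Pi.neg_apply, mul_neg]
          rw [Finset.sum_neg_distrib, h4, neg_zero]
        set sneg : Finset (Fin (n + 1)) := Finset.univ.filter (fun i' => u i' < 0) with hsneg_def
        have hsneg : sneg.Nonempty := by
          obtain ⟨i', h⟩ := hneg_ex; exact ⟨i', by simp [hsneg_def, h]⟩
        set spos : Finset (Fin (n + 1)) := Finset.univ.filter (fun i' => 0 < u i') with hspos_def
        have hspos : spos.Nonempty := by
          obtain ⟨i', h⟩ := hpos_ex; exact ⟨i', by simp [hspos_def, h]⟩
        set tp : ℚ := sneg.inf' hsneg (fun i' => x i' / (-u i')) with htp_def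
        set tm : ℚ := spos.inf' hspos (fun i' => x i' / u i') with htm_def
        obtain ⟨ip, hip_mem, hip⟩ := Finset.exists_mem_eq_inf' hsneg (fun i' => x i' / (-u i'))
        obtain ⟨im, him_mem, him⟩ := Finset.exists_mem_eq_inf' hspos (fun i' => x i' / u i')
        rw [← htp_def] at hip
        rw [← htm_def] at him
        have hip_neg : u ip < 0 := by
          have := hip_mem; rw [hsneg_def] at this; simpa using this
        have him_pos : 0 < u im := by
          have := him_mem; rw [hspos_def] at this; simpa using this
        have htp_pos : 0 < tp := by
          rw [hip]; exact div_pos (hposx ip) (by linarith)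
        have htm_pos : 0 < tm := by
          rw [him]; exact div_pos (hposx im) him_pos
        have htp_le : ∀ i', u i' < 0 → tp * (-u i') ≤ x i' := by
          intro i' h
          have h1 : tp ≤ x i' / (-u i') := by
            rw [htp_def]
            exact Finset.inf'_le _ (by simp [hsneg_def, h])
          have h2 : (0 : ℚ) < -u i' := by linarith
          calc tp * (-u i') ≤ (x i' / (-u i')) * (-u i') :=
                mul_le_mul_of_nonneg_right h1 h2.le
            _ = x i' := div_mul_cancel₀ _ (ne_of_gt h2)
        have htm_le : ∀ i', 0 < u i' → tm * u i' ≤ x i' := by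
          intro i' h
          have h1 : tm ≤ x i' / u i' := by
            rw [htm_def]
            exact Finset.inf'_le _ (by simp [hspos_def, h])
          calc tm * u i' ≤ (x i' / u i') * u i' := mul_le_mul_of_nonneg_right h1 h.le
            _ = x i' := div_mul_cancel₀ _ (ne_of_gt h)
        have hz_nonneg : ∀ i', 0 ≤ x i' + tp * u i' := by
          intro i'
          rcases lt_or_ge (u i') 0 with h | h
          · have := htp_le i' h; nlinarith
          · have := mul_nonneg htp_pos.le h; have := hx i'; linarith
        have hw_nonneg : ∀ i', 0 ≤ x i' - tm * u i' := by
          intro i'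
          rcases lt_or_ge 0 (u i') with h | h
          · have := htm_le i' h; linarith
          · have h6 : tm * u i' ≤ 0 := mul_nonpos_of_nonneg_of_nonpos htm_pos.le h
            have := hx i'; linarith
        have hz_sol : ∀ j, ∑ i', (A j i' : ℚ) * (x i' + tp * u i') = (c j : ℚ) := by
          intro j
          have hexp : ∀ i' ∈ Finset.univ, (A j i' : ℚ) * (x i' + tp * u i') =
              (A j i' : ℚ) * x i' + tp * ((A j i' : ℚ) * u i') := fun i' _ => by ring
          rw [Finset.sum_congr rfl hexp, Finset.sum_add_distrib, ← Finset.mul_sum,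
            hsol j, huk j, mul_zero, add_zero]
        have hw_sol : ∀ j, ∑ i', (A j i' : ℚ) * (x i' - tm * u i') = (c j : ℚ) := by
          intro j
          have hexp : ∀ i' ∈ Finset.univ, (A j i' : ℚ) * (x i' - tm * u i') =
              (A j i' : ℚ) * x i' - tm * ((A j i' : ℚ) * u i') := fun i' _ => by ring
          rw [Finset.sum_congr rfl hexp, Finset.sum_sub_distrib, ← Finset.mul_sum,
            hsol j, huk j, mul_zero, sub_zero]
        have hz_zero : x ip + tp * u ip = 0 := by
          have hne : -u ip ≠ 0 := neg_ne_zero.mpr (ne_of_lt hip_neg)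
          rw [hip]
          calc x ip + x ip / -u ip * u ip = x ip - x ip / -u ip * -u ip := by ring
            _ = x ip - x ip := by rw [div_mul_cancel₀ _ hne]
            _ = 0 := sub_self _
        have hw_zero : x im - tm * u im = 0 := by
          have hne : u im ≠ 0 := ne_of_gt him_pos
          rw [him]
          rw [div_mul_cancel₀ _ hne]
          exact sub_self _
        have hzb := hzero _ hz_nonneg hz_sol ⟨ip, hz_zero⟩
        have hwb := hzero _ hw_nonneg hw_sol ⟨im, hw_zero⟩
        have h1 : (tp + tm) * x i = tm * (x i + tp * u i) + tp * (x i - tm * u i) := by ring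
        have h2 : (tp + tm) * x i ≤ (tp + tm) * B ^ n := by
          rw [h1]
          have a1 := mul_le_mul_of_nonneg_left (hzb i) htm_pos.le
          have a2 := mul_le_mul_of_nonneg_left (hwb i) htp_pos.le
          nlinarith [a1, a2]
        have h3 : x i ≤ B ^ n := le_of_mul_le_mul_left h2 (by linarith)
        exact le_trans h3 (pow_le_pow_right₀ hB1 (Nat.le_succ n))

/-- If a system of `m` linear equations in `n` natural-number variables with
coefficients and constants bounded by `a` has a solution exceeding
`((m+2)·a+1)^n` in some component, then it has infinitely many solutions. -/
theorem stmt_14 (m n : ℕ) (A : Fin m → Fin n → ℤ) (c : Fin m → ℤ) (a : ℕ)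
    (hA : ∀ j i, |A j i| ≤ (a : ℤ)) (hc : ∀ j, |c j| ≤ (a : ℤ))
    (hbig : ∃ x ∈ {x : Fin n → ℕ | ∀ j, ∑ i, A j i * (x i : ℤ) = c j},
      ∃ i, ((m + 2) * a + 1) ^ n < x i) :
    {x : Fin n → ℕ | ∀ j, ∑ i, A j i * (x i : ℤ) = c j}.Infinite := by
  obtain ⟨x₀, hx₀S, i₀, hbig₀⟩ := hbig
  simp only [Set.mem_setOf_eq] at hx₀S
  by_cases hker : ∃ u : Fin n → ℚ, (∀ i, 0 ≤ u i) ∧ u ≠ 0 ∧ ∀ j, ∑ i, (A j i : ℚ) * u i = 0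
  · obtain ⟨u, hu0, hune, huk⟩ := hker
    set d : ℕ := ∏ i, (u i).den with hd
    have hd_pos : 0 < d := Finset.prod_pos fun i _ => (u i).pos
    have hint : ∀ i, ∃ k : ℕ, (k : ℚ) = u i * d := by
      intro i
      refine ⟨(u i).num.toNat * ∏ i' ∈ Finset.univ.erase i, (u i').den, ?_⟩
      have hnum : 0 ≤ (u i).num := Rat.num_nonneg.mpr (hu0 i)
      have hden0 : ((u i).den : ℚ) ≠ 0 := by exact_mod_cast (u i).den_ne_zero
      have hd_eq : (d : ℚ) = ((u i).den : ℚ) * ∏ i' ∈ Finset.univ.erase i, ((u i').den : ℚ) := by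
        rw [hd, ← Finset.mul_prod_erase _ _ (Finset.mem_univ i)]
        push_cast
        ring
      have hnum_cast : (((u i).num.toNat : ℕ) : ℚ) = ((u i).num : ℚ) := by
        exact_mod_cast congrArg (fun z : ℤ => (z : ℚ)) (Int.toNat_of_nonneg hnum)
      have hmulden : u i * ((u i).den : ℚ) = ((u i).num : ℚ) := by
        nth_rewrite 1 [← Rat.num_div_den (u i)]
        exact div_mul_cancel₀ _ hden0
      have hkeyq : u i * (d : ℚ) = ((u i).num : ℚ) * ∏ i' ∈ Finset.univ.erase i, ((u i').den : ℚ) := by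
        rw [hd_eq, ← mul_assoc, hmulden]
      push_cast
      rw [hnum_cast, hkeyq]
    choose w hw using hint
    have hwker : ∀ j, ∑ i, A j i * (w i : ℤ) = 0 := by
      intro j
      have hq : ((∑ i, A j i * (w i : ℤ) : ℤ) : ℚ) = 0 := by
        push_cast
        calc ∑ i, (A j i : ℚ) * (w i : ℚ)
            = ∑ i, (A j i : ℚ) * (u i * d) := by
              refine Finset.sum_congr rfl fun i _ => by rw [hw i]
          _ = (d : ℚ) * ∑ i, (A j i : ℚ) * u i := by
              rw [Finset.mul_sum]; exact Finset.sum_congr rfl fun i _ => by ring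
          _ = 0 := by rw [huk j, mul_zero]
      exact_mod_cast hq
    obtain ⟨iw, hiw⟩ := Function.ne_iff.mp hune
    have hwne : w iw ≠ 0 := by
      intro h0
      have := hw iw
      rw [h0] at this
      simp only [Nat.cast_zero] at this
      have hdq : (d : ℚ) ≠ 0 := by exact_mod_cast hd_pos.ne'
      exact hiw (by
        have := (mul_eq_zero.mp this.symm).resolve_right hdq
        simpa using this)
    refine Set.infinite_of_injective_forall_mem
      (f := fun t : ℕ => fun i => x₀ i + t * w i) ?_ ?_
    · intro t1 t2 h
      have h1 := congrFun h iw
      simp only at h1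
      have hwpos : 0 < w iw := Nat.pos_of_ne_zero hwne
      exact Nat.eq_of_mul_eq_mul_right hwpos (Nat.add_left_cancel h1)
    · intro t
      simp only [Set.mem_setOf_eq]
      intro j
      push_cast
      calc ∑ i, A j i * ((x₀ i : ℤ) + (t : ℤ) * (w i : ℤ))
          = (∑ i, A j i * (x₀ i : ℤ)) + (t : ℤ) * ∑ i, A j i * (w i : ℤ) := by
            rw [Finset.mul_sum, ← Finset.sum_add_distrib]
            exact Finset.sum_congr rfl fun i _ => by ring
        _ = c j := by rw [hx₀S j, hwker j, mul_zero, add_zero]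
  · exfalso
    have hsolQ : ∀ j, ∑ i, (A j i : ℚ) * ((x₀ i : ℕ) : ℚ) = (c j : ℚ) := fun j => by
      exact_mod_cast hx₀S j
    have hb := key_bound m a n A c hA hc hker (fun i => ((x₀ i : ℕ) : ℚ))
      (fun i => by positivity) hsolQ i₀
    have h2 : (x₀ i₀ : ℚ) ≤ ((((m + 2) * a + 1) ^ n : ℕ) : ℚ) := by
      push_cast at hb ⊢
      exact hb
    have h3 : x₀ i₀ ≤ ((m + 2) * a + 1) ^ n := by exact_mod_cast h2
    omega
end
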